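/- Let G₁, G₂ ≤ Aut(X*) be weakly branch groups and let φ : G₁ → G₂ be a saturated isomorphism. Then φ is induced by an automorphism of the tree: there exists f ∈ Aut(X*) such that φ(g) = f g f⁻¹ for all g ∈ G₁. -/

import Mathlib

/-!  Common setup: the group `Aut(X*)` of automorphisms of the rooted binary tree,
the Grigorchuk generators `a, b_ω, c_ω, d_ω`, and the subgroups `G_ω`, `L_ω`. -/

/-- Finite words over `X = {0,1}`: vertices of the rooted binary tree. -/
abbrev Word := List Bool

/-- `Aut(X*)`: bijections of the set of words which preserve word length
(hence fix the empty word) and preserve the prefix relation, as a subgroup of the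
permutation group of `Word`. -/
def TreeAut : Subgroup (Equiv.Perm Word) where
  carrier := {g | (∀ w : Word, (g w).length = w.length) ∧
      ∀ u v : Word, u <+: v ↔ g u <+: g v}
  one_mem' := ⟨fun _ => rfl, fun _ _ => Iff.rfl⟩
  mul_mem' := by
    rintro g h ⟨hg1, hg2⟩ ⟨hh1, hh2⟩
    refine ⟨fun w => ?_, fun u v => ?_⟩
    · simpa using (hg1 (h w)).trans (hh1 w)
    · simpa using (hh2 u v).trans (hg2 (h u) (h v))
  inv_mem' := by
    rintro g ⟨hg1, hg2⟩
    refine ⟨fun w => ?_, fun u v => ?_⟩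
    · have := hg1 (g⁻¹ w)
      rw [Equiv.Perm.inv_def, Equiv.apply_symm_apply] at this
      exact this.symm
    · have := (hg2 (g⁻¹ u) (g⁻¹ v)).symm
      simpa using this

/-- Application of a tree automorphism to a word. -/
def ap (g : ↥TreeAut) (w : Word) : Word := (g : Equiv.Perm Word) w

/-- The root permutation `a` (as a map): `a(0v) = 1v`, `a(1v) = 0v`. -/
def aFun : Word → Word
  | [] => []
  | x :: v => (!x) :: v

/-- The common recursive pattern of the maps `b_ω, c_ω, d_ω`: on `0v` act by the
identity if `ω 0 = k` and by `a` otherwise, on `1v` recurse with the shifted sequence.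
(`k = 2` gives `b`, `k = 1` gives `c`, `k = 0` gives `d`.) -/
def genFun (k : Fin 3) : (ℕ → Fin 3) → Word → Word
  | _, [] => []
  | ω, false :: v => false :: (if ω 0 = k then v else aFun v)
  | ω, true :: v => true :: genFun k (fun n => ω (n + 1)) v

lemma aFun_invol : Function.Involutive aFun := by
  intro w; cases w with
  | nil => rfl
  | cons x v => simp [aFun]

lemma aFun_length : ∀ w : Word, (aFun w).length = w.length := by
  intro w; cases w <;> simp [aFun]

lemma aFun_prefix : ∀ u v : Word, u <+: v → aFun u <+: aFun v := by
  intro u v h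
  cases u with
  | nil => simp [aFun]
  | cons x u' =>
    cases v with
    | nil => simp at h
    | cons y v' =>
      rw [List.cons_prefix_cons] at h
      obtain ⟨rfl, h2⟩ := h
      simpa [aFun, List.cons_prefix_cons] using h2

lemma genFun_length (k : Fin 3) : ∀ (w : Word) (ω : ℕ → Fin 3),
    (genFun k ω w).length = w.length
  | [], _ => rfl
  | false :: v, ω => by
    by_cases h : ω 0 = k <;> simp [genFun, h, aFun_length]
  | true :: v, ω => by
    simp [genFun, genFun_length k v]

lemma genFun_invol (k : Fin 3) : ∀ (w : Word) (ω : ℕ → Fin 3),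
    genFun k ω (genFun k ω w) = w
  | [], _ => rfl
  | false :: v, ω => by
    by_cases h : ω 0 = k <;> simp [genFun, h, aFun_invol v]
  | true :: v, ω => by
    simp [genFun, genFun_invol k v]

lemma genFun_prefix (k : Fin 3) : ∀ (u v : Word) (ω : ℕ → Fin 3),
    u <+: v → genFun k ω u <+: genFun k ω v
  | [], v, ω, _ => by simp [genFun]
  | x :: u', [], ω, h => by simp at h
  | x :: u', y :: v', ω, h => by
    rw [List.cons_prefix_cons] at h
    obtain ⟨rfl, h2⟩ := h
    cases x with
    | false =>
      by_cases h0 : ω 0 = k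
      · simpa [genFun, h0, List.cons_prefix_cons] using h2
      · simpa [genFun, h0, List.cons_prefix_cons] using aFun_prefix u' v' h2
    | true =>
      simpa [genFun, List.cons_prefix_cons] using genFun_prefix k u' v' _ h2

/-- Build an element of `Aut(X*)` from an involutive, length-preserving,
prefix-preserving map. -/
def mkAut (f : Word → Word) (hinv : Function.Involutive f)
    (hlen : ∀ w, (f w).length = w.length)
    (hpre : ∀ u v : Word, u <+: v → f u <+: f v) : ↥TreeAut :=
  ⟨hinv.toPerm, by
    refine ⟨fun w => ?_, fun u v => ⟨fun h => ?_, fun h => ?_⟩⟩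
    · simpa using hlen w
    · simpa using hpre u v h
    · have := hpre _ _ (by simpa using h)
      simpa [hinv u, hinv v] using this⟩

/-- The automorphism `a`. -/
def aAut : ↥TreeAut := mkAut aFun aFun_invol aFun_length aFun_prefix

/-- The automorphism `b_ω`. -/
def bAut (ω : ℕ → Fin 3) : ↥TreeAut :=
  mkAut (genFun 2 ω) (fun w => genFun_invol 2 w ω) (fun w => genFun_length 2 w ω)
    (fun u v h => genFun_prefix 2 u v ω h)

/-- The automorphism `c_ω`. -/
def cAut (ω : ℕ → Fin 3) : ↥TreeAut :=
  mkAut (genFun 1 ω) (fun w => genFun_invol 1 w ω) (fun w => genFun_length 1 w ω)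
    (fun u v h => genFun_prefix 1 u v ω h)

/-- The automorphism `d_ω`. -/
def dAut (ω : ℕ → Fin 3) : ↥TreeAut :=
  mkAut (genFun 0 ω) (fun w => genFun_invol 0 w ω) (fun w => genFun_length 0 w ω)
    (fun u v h => genFun_prefix 0 u v ω h)

/-- `G_ω = ⟨a, b_ω, c_ω, d_ω⟩`. -/
def Ggrp (ω : ℕ → Fin 3) : Subgroup ↥TreeAut :=
  Subgroup.closure {aAut, bAut ω, cAut ω, dAut ω}

/-- `L_ω = ⟨a b_ω, d_ω⟩`. -/
def Lgrp (ω : ℕ → Fin 3) : Subgroup ↥TreeAut :=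
  Subgroup.closure {aAut * bAut ω, dAut ω}

/-- The `n`-fold shift `σⁿω`. -/
def shift (n : ℕ) (ω : ℕ → Fin 3) : ℕ → Fin 3 := fun m => ω (m + n)

/-- `Ω_∞`: sequences in which each of `0, 1, 2` occurs infinitely often. -/
def OmegaInf : Set (ℕ → Fin 3) := {ω | ∀ k : Fin 3, ∀ N : ℕ, ∃ n, N ≤ n ∧ ω n = k}

/-- `g` fixes every word of length `n`. -/
def fixesLevel (g : ↥TreeAut) (n : ℕ) : Prop := ∀ w : Word, w.length = n → ap g w = w

/-- The subgroup of all tree automorphisms acting trivially outside the subtree `uX*`. -/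
def ristSubgroup (u : Word) : Subgroup ↥TreeAut where
  carrier := {g | ∀ w : Word, ¬ u <+: w → ap g w = w}
  one_mem' := by intro w _; rfl
  mul_mem' := by
    intro g h hg hh w hw
    have e1 : ap g w = w := hg w hw
    have e2 : ap h w = w := hh w hw
    simp only [ap] at e1 e2
    show (g : Equiv.Perm Word) ((h : Equiv.Perm Word) w) = w
    rw [e2, e1]
  inv_mem' := by
    intro g hg w hw
    have h1' : ap g w = w := hg w hw
    have h1 : (g : Equiv.Perm Word) w = w := h1'
    show ((g : Equiv.Perm Word))⁻¹ w = w
    conv_lhs => rw [← h1]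
    simp

/-- The subgroup of all tree automorphisms fixing every word of length `n`
(the `n`-th level stabilizer in `Aut(X*)`). -/
def levelStab (n : ℕ) : Subgroup ↥TreeAut where
  carrier := {g | fixesLevel g n}
  one_mem' := by intro w _; rfl
  mul_mem' := by
    intro g h hg hh w hw
    have e1 : ap g w = w := hg w hw
    have e2 : ap h w = w := hh w hw
    simp only [ap] at e1 e2
    show (g : Equiv.Perm Word) ((h : Equiv.Perm Word) w) = w
    rw [e2, e1]
  inv_mem' := by
    intro g hg w hw
    have h1' : ap g w = w := hg w hw
    have h1 : (g : Equiv.Perm Word) w = w := h1'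
    show ((g : Equiv.Perm Word))⁻¹ w = w
    conv_lhs => rw [← h1]
    simp

/-- The rigid level stabilizer `Rist_G(n)`: the subgroup generated by the rigid vertex
stabilizers `Rist_G(u) = G ⊓ ristSubgroup u` over all words `u` of length `n`. -/
def ristLevel (G : Subgroup ↥TreeAut) (n : ℕ) : Subgroup ↥TreeAut :=
  ⨆ u ∈ {u : Word | u.length = n}, G ⊓ ristSubgroup u

/-- `G` acts transitively on each level of the tree. -/
def LevelTransitive (G : Subgroup ↥TreeAut) : Prop :=
  ∀ u v : Word, u.length = v.length → ∃ g ∈ G, ap g u = v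

/-- A set of tree automorphisms acts level transitively on the subtree `vX*`. -/
def LevelTransitiveOn (S : Set ↥TreeAut) (v : Word) : Prop :=
  ∀ u₁ u₂ : Word, u₁.length = u₂.length → ∃ g ∈ S, ap g (v ++ u₁) = v ++ u₂

/-- `L_{n,ω}`: `L_{0,ω} = L_ω` and `L_{n,ω}` is generated by the squares of
elements of `L_{n-1,ω}`. -/
def Lsq (ω : ℕ → Fin 3) : ℕ → Subgroup ↥TreeAut
  | 0 => Lgrp ω
  | n + 1 => Subgroup.closure {x | ∃ y ∈ Lsq ω n, x = y * y}

/-- `g` is active at the word `v`: the section `g_v` acts nontrivially on the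
one-letter words. -/
def IsActive (g : ↥TreeAut) (v : Word) : Prop :=
  ap g (v ++ [false]) ≠ ap g v ++ [false]

open scoped Classical in
/-- `p(g)_n`: the number of words of length `n` at which `g` is active, mod 2
(words of length `n` are enumerated as `List.ofFn f` for `f : Fin n → Bool`). -/
noncomputable def pMap (g : ↥TreeAut) (n : ℕ) : ZMod 2 :=
  (((Finset.univ : Finset (Fin n → Bool)).filter
    (fun f => IsActive g (List.ofFn f))).card : ZMod 2)

/-- `G` is weakly branch: level transitive with all rigid vertex stabilizers
nontrivial. -/
def WeaklyBranch (G : Subgroup ↥TreeAut) : Prop :=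
  LevelTransitive G ∧ ∀ u : Word, G ⊓ ristSubgroup u ≠ ⊥

/-- An isomorphism `φ : G₁ → G₂` is saturated if there are subgroups `H n ≤ G₁` with
`H n ≤ St_{G₁}(n)`, `φ(H n) ≤ St_{G₂}(n)`, and for every word `v` of length `n` both
`H n` and `φ(H n)` act level transitively on the subtree `vX*`. -/
def Saturated (G₁ G₂ : Subgroup ↥TreeAut) (φ : ↥G₁ ≃* ↥G₂) : Prop :=
  ∃ H : ℕ → Subgroup ↥G₁,
    (∀ n, ∀ h ∈ H n, fixesLevel ((h : ↥G₁) : ↥TreeAut) n) ∧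
    (∀ n, ∀ h ∈ H n, fixesLevel ((φ h : ↥G₂) : ↥TreeAut) n) ∧
    (∀ n, ∀ v : Word, v.length = n →
      LevelTransitiveOn ((fun x : ↥G₁ => (x : ↥TreeAut)) '' (H n : Set ↥G₁)) v ∧
      LevelTransitiveOn ((fun x : ↥G₁ => ((φ x : ↥G₂) : ↥TreeAut)) '' (H n : Set ↥G₁)) v)


/-! ### Auxiliary development for Statement 14 -/

namespace St14

open List

lemma ap_mul (x y : ↥TreeAut) (w : Word) : ap (x * y) w = ap x (ap y w) := rfl

lemma ap_one (w : Word) : ap 1 w = w := rfl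

lemma ap_len (x : ↥TreeAut) (w : Word) : (ap x w).length = w.length := x.2.1 w

lemma ap_prefix_iff (x : ↥TreeAut) {u v : Word} : u <+: v ↔ ap x u <+: ap x v := x.2.2 u v

lemma ap_prefix (x : ↥TreeAut) {u v : Word} (h : u <+: v) : ap x u <+: ap x v :=
  (ap_prefix_iff x).1 h

lemma ap_inj (x : ↥TreeAut) {u v : Word} (h : ap x u = ap x v) : u = v := by
  have := (x : Equiv.Perm Word).injective h
  exact this

lemma ap_inv_ap (x : ↥TreeAut) (w : Word) : ap x⁻¹ (ap x w) = w := by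
  simp [ap]

lemma ap_ap_inv (x : ↥TreeAut) (w : Word) : ap x (ap x⁻¹ w) = w := by
  simp [ap]

lemma ap_inv_eq (x : ↥TreeAut) {u w : Word} (h : ap x u = w) : ap x⁻¹ w = u := by
  rw [← h, ap_inv_ap]

lemma ap_eq_of_inv (x : ↥TreeAut) {u w : Word} (h : ap x⁻¹ w = u) : ap x u = w := by
  rw [← h, ap_ap_inv]

/-- pointwise equality implies equality in the group -/
lemma treeaut_ext {x y : ↥TreeAut} (h : ∀ w, ap x w = ap y w) : x = y := by
  apply Subtype.ext
  apply Equiv.ext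
  exact h

lemma commute_of_pointwise {x y : ↥TreeAut} (h : ∀ w, ap x (ap y w) = ap y (ap x w)) :
    Commute x y := by
  have : x * y = y * x := treeaut_ext (fun w => h w)
  exact this

lemma pointwise_of_commute {x y : ↥TreeAut} (h : Commute x y) (w : Word) :
    ap x (ap y w) = ap y (ap x w) := by
  have : ap (x * y) w = ap (y * x) w := by rw [h.eq]
  simpa [ap_mul] using this

/-- a nontrivial tree automorphism moves some word -/
lemma exists_moved {x : ↥TreeAut} (h : x ≠ 1) : ∃ w, ap x w ≠ w := by
  by_contra hc
  push_neg at hc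
  exact h (treeaut_ext (fun w => by rw [hc w, ap_one]))

/-- prefixes of the same word are comparable -/
lemma prefix_comparable {u v w : Word} (hu : u <+: w) (hv : v <+: w) :
    u <+: v ∨ v <+: u := by
  have hu' : u = w.take u.length := List.prefix_iff_eq_take.1 hu
  have hv' : v = w.take v.length := List.prefix_iff_eq_take.1 hv
  rcases le_or_gt u.length v.length with h | h
  · left
    have key : v.take u.length = u := by
      conv_lhs => rw [hv']
      rw [List.take_take, min_eq_left h, ← hu']
    exact key ▸ List.take_prefix _ _
  · right
    have key : u.take v.length = v := by
      conv_lhs => rw [hu']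
      rw [List.take_take, min_eq_left h.le, ← hv']
    exact key ▸ List.take_prefix _ _

lemma prefix_eq_of_len {u v : Word} (h : u <+: v) (hl : u.length = v.length) : u = v :=
  List.IsPrefix.eq_of_length h hl

/-- two distinct words of the same length: neither is a prefix of the other -/
lemma not_prefix_of_ne {u v : Word} (hl : u.length = v.length) (hne : u ≠ v) :
    ¬ u <+: v := fun h => hne (prefix_eq_of_len h hl)

/-- cones of incomparable words are disjoint -/
lemma cones_disjoint {u v w : Word} (huv : ¬ u <+: v) (hvu : ¬ v <+: u)
    (hu : u <+: w) (hv : v <+: w) : False := by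
  rcases prefix_comparable hu hv with h | h
  · exact huv h
  · exact hvu h

lemma cones_disjoint_of_ne {u v w : Word} (hl : u.length = v.length) (hne : u ≠ v)
    (hu : u <+: w) (hv : v <+: w) : False :=
  cones_disjoint (not_prefix_of_ne hl hne) (not_prefix_of_ne hl.symm hne.symm) hu hv

end St14

namespace St14

lemma mem_rist {x : ↥TreeAut} {u : Word} (h : x ∈ ristSubgroup u) :
    ∀ w, ¬ u <+: w → ap x w = w := h

lemma mem_rist_iff {x : ↥TreeAut} {u : Word} :
    x ∈ ristSubgroup u ↔ ∀ w, ¬ u <+: w → ap x w = w := Iff.rfl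

/-- if `x` fixes `v` then it fixes every prefix of `v` -/
lemma fixes_prefix {x : ↥TreeAut} {u v : Word} (hv : ap x v = v) (huv : u <+: v) :
    ap x u = u := by
  have h1 : ap x u <+: v := hv ▸ ap_prefix x huv
  have h2 : (ap x u).length = u.length := ap_len x u
  rcases prefix_comparable h1 huv with h | h
  · exact prefix_eq_of_len h h2
  · exact (prefix_eq_of_len h h2.symm).symm

/-- moving a word means moving all its descendants -/
lemma moved_desc {x : ↥TreeAut} {w w' : Word} (h : ap x w ≠ w) (hp : w <+: w') :
    ap x w' ≠ w' := fun he => h (fixes_prefix he hp)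

lemma rist_fix_self {x : ↥TreeAut} {u : Word} (h : x ∈ ristSubgroup u) :
    ap x u = u := by
  by_contra hne
  have hlen : (ap x u).length = u.length := ap_len x u
  have hnp : ¬ u <+: ap x u := not_prefix_of_ne hlen.symm (fun he => hne he.symm)
  have : ap x⁻¹ (ap x u) = ap x u := mem_rist ((ristSubgroup u).inv_mem h) _ hnp
  rw [ap_inv_ap] at this
  exact hne this.symm

lemma rist_moved_prefix {x : ↥TreeAut} {u w : Word} (h : x ∈ ristSubgroup u)
    (hm : ap x w ≠ w) : u <+: w := by
  by_contra hc
  exact hm (mem_rist h w hc)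

lemma rist_cone_preserve {x : ↥TreeAut} {u w : Word} (h : x ∈ ristSubgroup u)
    (hw : u <+: w) : u <+: ap x w := by
  have := ap_prefix x hw
  rwa [rist_fix_self h] at this

lemma rist_mono {u u' : Word} (h : u <+: u') : ristSubgroup u' ≤ ristSubgroup u := by
  intro x hx w hw
  exact mem_rist hx w (fun hc => hw (h.trans hc))

lemma conj_rist {x g : ↥TreeAut} {u : Word} (hg : g ∈ ristSubgroup u) :
    x * g * x⁻¹ ∈ ristSubgroup (ap x u) := by
  intro w hw
  have h1 : ¬ u <+: ap x⁻¹ w := by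
    intro hc
    have := ap_prefix x hc
    rw [ap_ap_inv] at this
    exact hw this
  show ap (x * g * x⁻¹) w = w
  rw [show x * g * x⁻¹ = x * (g * x⁻¹) by group, ap_mul, ap_mul,
    mem_rist hg _ h1, ap_ap_inv]

/-- elements supported in disjoint cones commute -/
lemma disjoint_rist_commute {x y : ↥TreeAut} {u v : Word}
    (hx : x ∈ ristSubgroup u) (hy : y ∈ ristSubgroup v)
    (huv : ¬ u <+: v) (hvu : ¬ v <+: u) : Commute x y := by
  apply commute_of_pointwise
  intro w
  by_cases h1 : u <+: w
  · have h2 : ¬ v <+: w := fun hc => cones_disjoint huv hvu h1 hc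
    have h3 : ¬ v <+: ap x w := fun hc =>
      cones_disjoint huv hvu (rist_cone_preserve hx h1) hc
    rw [mem_rist hy w h2, mem_rist hy _ h3]
  · by_cases h2 : v <+: w
    · have h3 : ¬ u <+: ap y w := fun hc =>
        cones_disjoint huv hvu hc (rist_cone_preserve hy h2)
      rw [mem_rist hx w h1, mem_rist hx _ h3]
    · rw [mem_rist hy w h2, mem_rist hx w h1, mem_rist hy w h2]

/-- `x` acts trivially on the cone of `u` -/
def TrivOn (x : ↥TreeAut) (u : Word) : Prop := ∀ w, u <+: w → ap x w = w

lemma trivOn_inv {x : ↥TreeAut} {u : Word} (h : TrivOn x u) : TrivOn x⁻¹ u := by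
  intro w hw
  have := h w hw
  conv_lhs => rw [← this]
  rw [ap_inv_ap]

/-- trivial on a cone implies commuting with everything supported inside -/
lemma trivOn_commute_rist {x y : ↥TreeAut} {u : Word} (hx : TrivOn x u)
    (hy : y ∈ ristSubgroup u) : Commute x y := by
  apply commute_of_pointwise
  intro w
  by_cases h1 : u <+: w
  · rw [hx w h1, hx _ (rist_cone_preserve hy h1)]
  · have h2 : ¬ u <+: ap x w := by
      intro hc
      have := ap_prefix x⁻¹ hc
      rw [ap_inv_ap, trivOn_inv hx u (List.prefix_refl u)] at this
      exact h1 this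
    rw [mem_rist hy w h1, mem_rist hy _ h2]

/-- Fact 1 (hard direction): if `x` commutes with a nontrivial element supported in
every subcone of `u`, then `x` is trivial on the cone of `u`. -/
lemma fact1_hard {x : ↥TreeAut} {u : Word}
    (h : ∀ w, u <+: w → ∃ z, z ∈ ristSubgroup w ∧ z ≠ 1 ∧ Commute x z) :
    TrivOn x u := by
  intro w hw
  obtain ⟨z, hz, hz1, hzc⟩ := h w hw
  obtain ⟨w2, hw2⟩ := exists_moved hz1
  have hw2p : w <+: w2 := rist_moved_prefix hz hw2
  have hmoved : ap z (ap x w2) ≠ ap x w2 := by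
    rw [← pointwise_of_commute hzc]
    intro hc
    exact hw2 (ap_inj x hc)
  have h1 : w <+: ap x w2 := rist_moved_prefix hz hmoved
  have h2 : ap x w <+: ap x w2 := ap_prefix x hw2p
  have h3 : (ap x w).length = w.length := ap_len x w
  rcases prefix_comparable h2 h1 with h | h
  · exact prefix_eq_of_len h h3
  · exact (prefix_eq_of_len h h3.symm).symm

/-- level fixing implies fixing all shorter words -/
lemma fixesLevel_fixes {x : ↥TreeAut} {L : ℕ} (h : fixesLevel x L) {w : Word}
    (hw : w.length ≤ L) : ap x w = w := by
  have hfix : ap x (w ++ List.replicate (L - w.length) false)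
      = w ++ List.replicate (L - w.length) false := by
    apply h
    simp [List.length_replicate]
    omega
  exact fixes_prefix hfix (List.prefix_append _ _)

lemma fixesLevel_mul {x y : ↥TreeAut} {L : ℕ} (hx : fixesLevel x L)
    (hy : fixesLevel y L) : fixesLevel (x * y) L := by
  intro w hw
  rw [ap_mul, hy w hw, hx w hw]

lemma fixesLevel_inv {x : ↥TreeAut} {L : ℕ} (hx : fixesLevel x L) :
    fixesLevel x⁻¹ L := by
  intro w hw
  conv_lhs => rw [← hx w hw]
  rw [ap_inv_ap]

lemma fixesLevel_conj {x z : ↥TreeAut} {L : ℕ} (hz : fixesLevel z L) :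
    fixesLevel (x * z * x⁻¹) L := by
  intro w hw
  rw [show x * z * x⁻¹ = x * (z * x⁻¹) by group, ap_mul, ap_mul]
  rw [hz _ (by rw [ap_len]; exact hw), ap_ap_inv]

/-- the commutator `[r,h] = r h r⁻¹ h⁻¹` fixes level `L` whenever `h` does -/
lemma commutator_fixesLevel {r h : ↥TreeAut} {L : ℕ} (hh : fixesLevel h L) :
    fixesLevel (r * h * r⁻¹ * h⁻¹) L := by
  have : r * h * r⁻¹ * h⁻¹ = (r * h * r⁻¹) * h⁻¹ := by group
  rw [this]
  exact fixesLevel_mul (fixesLevel_conj hh) (fixesLevel_inv hh)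

end St14

namespace St14

lemma append_prefix_append {u s t : Word} : (u ++ s) <+: (u ++ t) ↔ s <+: t := by
  induction u with
  | nil => simp
  | cons a u ih => simp [List.cons_append, List.cons_prefix_cons, ih]

lemma child_ne {u : Word} : u ++ [false] ≠ u ++ [true] := by simp

lemma child_len {u : Word} (b : Bool) : (u ++ [b]).length = u.length + 1 := by simp

lemma prefix_child {u : Word} (b : Bool) : u <+: u ++ [b] := List.prefix_append _ _

/-- a prefix one letter short: the word is `u ++ [b]` -/
lemma prefix_succ_exists {u v : Word} (h : u <+: v) (hl : v.length = u.length + 1) :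
    ∃ b, v = u ++ [b] := by
  obtain ⟨t, rfl⟩ := h
  have : t.length = 1 := by
    have := hl
    simp at this
    omega
  match t, this with
  | [b], _ => exact ⟨b, rfl⟩

/-- words below `u ++ [false]` are not below `u ++ [true]` -/
lemma not_below_other_child {u w : Word} {b : Bool} (h : u ++ [b] <+: w) :
    ¬ u ++ [!b] <+: w := fun hc =>
  cones_disjoint_of_ne (by simp) (by cases b <;> simp) h hc


/-- two prefixes of the same word with the same length agree -/
lemma prefix_unique {u₁ u₂ w : Word} (h1 : u₁ <+: w) (h2 : u₂ <+: w)
    (hl : u₁.length = u₂.length) : u₁ = u₂ := by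
  rcases prefix_comparable h1 h2 with h | h
  · exact prefix_eq_of_len h hl
  · exact (prefix_eq_of_len h hl.symm).symm

/-- The bridge element `c = r h r⁻¹ h⁻¹` where `r` is supported in the cone of
`δ0 = δ ++ [false]` and `h` maps `δ0` to `δ1`. -/
lemma bridge_props {r h : ↥TreeAut} {δ : Word}
    (hr : r ∈ ristSubgroup (δ ++ [false]))
    (hh : ap h (δ ++ [false]) = δ ++ [true]) :
    (r * h * r⁻¹ * h⁻¹) ∈ ristSubgroup δ ∧
    (∀ w, δ ++ [false] <+: w → ap (r * h * r⁻¹ * h⁻¹) w = ap r w) ∧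
    (∀ y, δ ++ [true] <+: y → ap (r * h * r⁻¹ * h⁻¹) y = ap h (ap r⁻¹ (ap h⁻¹ y))) ∧
    (∀ w, δ ++ [false] <+: w → ap (r * h * r⁻¹ * h⁻¹)⁻¹ w = ap r⁻¹ w) ∧
    (∀ y, δ ++ [true] <+: y → ap (r * h * r⁻¹ * h⁻¹)⁻¹ y = ap h (ap r (ap h⁻¹ y))) := by
  set δ0 := δ ++ [false] with hδ0
  set δ1 := δ ++ [true] with hδ1
  set c := r * h * r⁻¹ * h⁻¹ with hc
  have hconj : h * r⁻¹ * h⁻¹ ∈ ristSubgroup δ1 := by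
    have := conj_rist (x := h) ((ristSubgroup δ0).inv_mem hr)
    rwa [hh] at this
  have hsplit : c = r * (h * r⁻¹ * h⁻¹) := by rw [hc]; group
  have hinvh : ap h⁻¹ δ1 = δ0 := ap_inv_eq h hh
  have h01 : ∀ w, δ0 <+: w → ¬ δ1 <+: w := fun w hw =>
    not_below_other_child (b := false) hw
  have h10 : ∀ w, δ1 <+: w → ¬ δ0 <+: w := fun w hw => by
    have := not_below_other_child (b := true) hw
    simpa using this
  -- action on the 0-cone
  have act0 : ∀ w, δ0 <+: w → ap c w = ap r w := by
    intro w hw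
    rw [hsplit, ap_mul, mem_rist hconj w (h01 w hw)]
  -- action on the 1-cone
  have act1 : ∀ y, δ1 <+: y → ap c y = ap h (ap r⁻¹ (ap h⁻¹ y)) := by
    intro y hy
    have hy0 : δ0 <+: ap h⁻¹ y := hinvh ▸ ap_prefix h⁻¹ hy
    have hy0' : δ0 <+: ap r⁻¹ (ap h⁻¹ y) :=
      rist_cone_preserve ((ristSubgroup δ0).inv_mem hr) hy0
    have hy1 : δ1 <+: ap h (ap r⁻¹ (ap h⁻¹ y)) := hh ▸ ap_prefix h hy0'
    have : ap c y = ap r (ap h (ap r⁻¹ (ap h⁻¹ y))) := rfl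
    rw [this, mem_rist hr _ (h10 _ hy1)]
  -- membership
  have hmem : c ∈ ristSubgroup δ := by
    rw [hsplit]
    exact (ristSubgroup δ).mul_mem (rist_mono (prefix_child false) hr)
      (rist_mono (prefix_child true) hconj)
  refine ⟨hmem, act0, act1, ?_, ?_⟩
  · intro w hw
    have hw' : δ0 <+: ap r⁻¹ w := rist_cone_preserve ((ristSubgroup δ0).inv_mem hr) hw
    have : ap c (ap r⁻¹ w) = w := by rw [act0 _ hw', ap_ap_inv]
    exact ap_inv_eq c this
  · intro y hy
    have hy0 : δ0 <+: ap h⁻¹ y := hinvh ▸ ap_prefix h⁻¹ hy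
    have hy0' : δ0 <+: ap r (ap h⁻¹ y) := rist_cone_preserve hr hy0
    have hy1 : δ1 <+: ap h (ap r (ap h⁻¹ y)) := hh ▸ ap_prefix h hy0'
    have : ap c (ap h (ap r (ap h⁻¹ y))) = y := by
      rw [act1 _ hy1, ap_inv_ap, ap_inv_ap, ap_ap_inv]
    exact ap_inv_eq c this

end St14

namespace St14

/-- The key rigidity machine: two elementwise-commuting subgroups, both normalized by
all bridge elements, cannot both act nontrivially below a common vertex. -/
lemma machine
    (P₀ P₁ : Subgroup ↥TreeAut)
    (J : ℕ → Set ↥TreeAut)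
    (R : Word → Subgroup ↥TreeAut)
    (L₀ : ℕ)
    (hJtrans : ∀ L, L₀ ≤ L → ∀ v : Word, v.length = L →
      ∀ s t : Word, s.length = t.length → ∃ h ∈ J L, ap h (v ++ s) = v ++ t)
    (hRrist : ∀ u, R u ≤ ristSubgroup u)
    (hRne : ∀ u, R u ≠ ⊥)
    (hRmono : ∀ u u' : Word, u <+: u' → R u' ≤ R u)
    (hNorm : ∀ (u : Word) (r : ↥TreeAut), r ∈ R u → ∀ L, L₀ ≤ L → ∀ h ∈ J L,
      ∀ p : ↥TreeAut, (p ∈ P₀ → (r*h*r⁻¹*h⁻¹) * p * (r*h*r⁻¹*h⁻¹)⁻¹ ∈ P₀) ∧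
           (p ∈ P₁ → (r*h*r⁻¹*h⁻¹) * p * (r*h*r⁻¹*h⁻¹)⁻¹ ∈ P₁))
    (hcomm : ∀ p ∈ P₀, ∀ q ∈ P₁, Commute p q)
    (x₀ : Word)
    (hA : ∀ x : Word, x₀ <+: x →
      (∃ p ∈ P₀, ∃ w, x <+: w ∧ ap p w ≠ w) ∧ (∃ q ∈ P₁, ∃ w, x <+: w ∧ ap q w ≠ w)) :
    False := by
  classical
  -- find a deep vertex γ moved by some q ∈ P₁
  obtain ⟨q, hqP, γ, hγdeep, hqγ⟩ := (hA (x₀ ++ List.replicate L₀ false)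
    (List.prefix_append _ _)).2
  set γ0 := γ ++ [false] with hγ0def
  set γ1 := γ ++ [true] with hγ1def
  have hx₀γ : x₀ <+: γ := (List.prefix_append _ _).trans hγdeep
  have hL₁ : L₀ ≤ γ.length := by
    have := hγdeep.length_le
    simp at this
    omega
  set γt := ap q γ with hγtdef
  have hγtlen : γt.length = γ.length := ap_len q γ
  have hγtne : γt ≠ γ := fun hh => hqγ hh
  -- nontrivial r supported below γ0
  have hRγ0 : ¬ ∀ x ∈ R γ0, x = (1 : ↥TreeAut) :=
    fun hall => hRne γ0 ((Subgroup.eq_bot_iff_forall _).mpr hall)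
  push_neg at hRγ0
  obtain ⟨r, hrR, hr1⟩ := hRγ0
  have hrrist : r ∈ ristSubgroup γ0 := hRrist γ0 hrR
  -- h swapping the children of γ
  obtain ⟨h, hhJ, hhγ⟩ := hJtrans γ.length hL₁ γ rfl [false] [true] rfl
  obtain ⟨hζrist, hζ0, -, hζinv0, -⟩ := bridge_props hrrist hhγ
  set ζ := r * h * r⁻¹ * h⁻¹ with hζdef
  -- the element e ∈ P₁ acting as r on the cone of γ0
  set e := ζ * q * ζ⁻¹ * q⁻¹ with hedef
  have heP : e ∈ P₁ := by
    have h1 : ζ * q * ζ⁻¹ ∈ P₁ :=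
      ((hNorm γ0 r hrR γ.length hL₁ h hhJ q).2) hqP
    have : e = (ζ * q * ζ⁻¹) * q⁻¹ := by rw [hedef]
    rw [this]
    exact P₁.mul_mem h1 (P₁.inv_mem hqP)
  have hqζq : q * ζ⁻¹ * q⁻¹ ∈ ristSubgroup γt := by
    have := conj_rist (x := q) ((ristSubgroup γ).inv_mem hζrist)
    rwa [← hγtdef] at this
  have he0 : ∀ w, γ0 <+: w → ap e w = ap r w := by
    intro w hw
    have hwγ : γ <+: w := (prefix_child false).trans hw
    have hnγt : ¬ γt <+: w := fun hc =>
      cones_disjoint_of_ne hγtlen hγtne hc hwγ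
    have : ap e w = ap ζ (ap (q * ζ⁻¹ * q⁻¹) w) := by
      rw [hedef, show ζ * q * ζ⁻¹ * q⁻¹ = ζ * (q * ζ⁻¹ * q⁻¹) by group, ap_mul]
    rw [this, mem_rist hqζq w hnγt, hζ0 w hw]
  have heinv0 : ∀ w, γ0 <+: w → ap e⁻¹ w = ap r⁻¹ w := by
    intro w hw
    have hw' : γ0 <+: ap r⁻¹ w :=
      rist_cone_preserve ((ristSubgroup γ0).inv_mem hrrist) hw
    have : ap e (ap r⁻¹ w) = w := by rw [he0 _ hw', ap_ap_inv]
    exact ap_inv_eq e this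
  -- the moved word μ below γ0, and a P₀-element p moving some ν below μ
  obtain ⟨μ, hμm⟩ := exists_moved hr1
  have hμ0 : γ0 <+: μ := rist_moved_prefix hrrist hμm
  have hx₀μ : x₀ <+: μ := hx₀γ.trans ((prefix_child false).trans hμ0)
  obtain ⟨p, hpP, ν, hνμ, hpν⟩ := (hA μ hx₀μ).1
  set ν0 := ν ++ [false] with hν0def
  set ν1 := ν ++ [true] with hν1def
  have hνγ0 : γ0 <+: ν := hμ0.trans hνμ
  have hL₂ : L₀ ≤ ν.length := by
    have h1 := hνγ0.length_le
    have h2 : γ0.length = γ.length + 1 := by simp [hγ0def]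
    omega
  set νb := ap p ν with hνbdef
  have hνblen : νb.length = ν.length := ap_len p ν
  have hνbne : νb ≠ ν := fun hh => hpν hh
  set ν4 := ap r⁻¹ ν0 with hν4def
  have hν4γ0 : γ0 <+: ν4 :=
    rist_cone_preserve ((ristSubgroup γ0).inv_mem hrrist) (hνγ0.trans (prefix_child false))
  have hrν4 : ap r ν4 = ν0 := by rw [hν4def, ap_ap_inv]
  set μ3 := ap r⁻¹ μ with hμ3def
  have hμ3ne : μ3 ≠ μ := by
    intro hc
    have := congrArg (ap r) hc
    rw [hμ3def, ap_ap_inv] at this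
    exact hμm this.symm
  have hμ3len : μ3.length = μ.length := ap_len r⁻¹ μ
  have hν4μ3 : μ3 <+: ν4 := by
    rw [hν4def, hμ3def]
    exact ap_prefix r⁻¹ (hνμ.trans (prefix_child false))
  -- the cones of ν and ν4 are disjoint
  have hdisj : ∀ w, ν <+: w → ν4 <+: w → False := by
    intro w h1 h2
    exact cones_disjoint_of_ne hμ3len hμ3ne (hν4μ3.trans h2) (hνμ.trans h1)
  -- length facts
  have hν4len : ν4.length = ν.length + 1 := by
    rw [hν4def]
    rw [ap_len]
    simp [hν0def]
  have hγ0ν0 : γ0 <+: ν0 := hνγ0.trans (prefix_child false)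
  have hpinvνb : ap p⁻¹ νb = ν := by rw [hνbdef, ap_inv_ap]
  -- an admissibility extractor
  have adm_lemma : ∀ (h' : ↥TreeAut) (x y : Word), ν0 <+: x → ν1 <+: y →
      ap h' x = y → ap h' ν0 = ν1 := by
    intro h' x y hx hy hxy
    have h1 : ap h' ν0 <+: y := hxy ▸ ap_prefix h' hx
    have h2 : (ap h' ν0).length = ν1.length := by
      rw [ap_len]
      simp [hν0def, hν1def]
    exact prefix_unique h1 hy h2
  -- bundled facts about the parametrized element F = ζ' p ζ'⁻¹ p⁻¹
  have hFP : ∀ s ∈ R ν0, ∀ h' ∈ J ν.length,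
      (s*h'*s⁻¹*h'⁻¹) * p * (s*h'*s⁻¹*h'⁻¹)⁻¹ * p⁻¹ ∈ P₀ := by
    intro s hs h' hh'
    exact P₀.mul_mem ((hNorm ν0 s hs ν.length hL₂ h' hh' p).1 hpP) (P₀.inv_mem hpP)
  have hζ'facts : ∀ (s h' : ↥TreeAut), s ∈ R ν0 → ap h' ν0 = ν1 →
      (s*h'*s⁻¹*h'⁻¹) ∈ ristSubgroup ν ∧
      (∀ w, ν0 <+: w → ap (s*h'*s⁻¹*h'⁻¹) w = ap s w) ∧
      (∀ w, ν0 <+: w → ap (s*h'*s⁻¹*h'⁻¹)⁻¹ w = ap s⁻¹ w) ∧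
      (∀ y, ν1 <+: y → ap (s*h'*s⁻¹*h'⁻¹)⁻¹ y = ap h' (ap s (ap h'⁻¹ y))) := by
    intro s h' hs hadm
    obtain ⟨m1, m2, -, m4, m5⟩ := bridge_props (hRrist ν0 hs) hadm
    exact ⟨m1, m2, m4, m5⟩
  -- general action facts for F
  have hFact : ∀ (s h' : ↥TreeAut), s ∈ R ν0 → ap h' ν0 = ν1 →
      (∀ w, ν0 <+: w →
        ap ((s*h'*s⁻¹*h'⁻¹) * p * (s*h'*s⁻¹*h'⁻¹)⁻¹ * p⁻¹) w = ap s w) ∧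
      (∀ x, ¬ ν <+: x → ¬ νb <+: x →
        ap ((s*h'*s⁻¹*h'⁻¹) * p * (s*h'*s⁻¹*h'⁻¹)⁻¹ * p⁻¹) x = x) ∧
      (∀ x, νb <+: x →
        ap ((s*h'*s⁻¹*h'⁻¹) * p * (s*h'*s⁻¹*h'⁻¹)⁻¹ * p⁻¹) x
          = ap p (ap (s*h'*s⁻¹*h'⁻¹)⁻¹ (ap p⁻¹ x))) := by
    intro s h' hs hadm
    obtain ⟨hζ'rist, hζ'0, hζ'inv0, hζ'inv1⟩ := hζ'facts s h' hs hadm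
    set ζ' := s*h'*s⁻¹*h'⁻¹ with hζ'def
    have hconj2 : p * ζ'⁻¹ * p⁻¹ ∈ ristSubgroup νb := by
      have := conj_rist (x := p) ((ristSubgroup ν).inv_mem hζ'rist)
      rwa [← hνbdef] at this
    have hsplit : ζ' * p * ζ'⁻¹ * p⁻¹ = ζ' * (p * ζ'⁻¹ * p⁻¹) := by group
    refine ⟨?_, ?_, ?_⟩
    · intro w hw
      have hwv : ν <+: w := (prefix_child false).trans hw
      have hnb : ¬ νb <+: w := fun hc =>
        cones_disjoint_of_ne hνblen hνbne hc hwv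
      rw [hsplit, ap_mul, mem_rist hconj2 w hnb, hζ'0 w hw]
    · intro x hx1 hx2
      rw [hsplit, ap_mul, mem_rist hconj2 x hx2, mem_rist hζ'rist x hx1]
    · intro x hx
      have e1 : ap (ζ' * p * ζ'⁻¹ * p⁻¹) x = ap ζ' (ap p (ap ζ'⁻¹ (ap p⁻¹ x))) := rfl
      have h1 : ν <+: ap p⁻¹ x := hpinvνb ▸ ap_prefix p⁻¹ hx
      have h2 : ν <+: ap ζ'⁻¹ (ap p⁻¹ x) :=
        rist_cone_preserve ((ristSubgroup ν).inv_mem hζ'rist) h1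
      have h3 : νb <+: ap p (ap ζ'⁻¹ (ap p⁻¹ x)) := hνbdef ▸ ap_prefix p h2
      have h4 : ¬ ν <+: ap p (ap ζ'⁻¹ (ap p⁻¹ x)) := fun hc =>
        cones_disjoint_of_ne hνblen hνbne h3 hc
      rw [e1, mem_rist hζ'rist _ h4]
  -- the master identity
  have hmaster : ∀ (s h' : ↥TreeAut), s ∈ R ν0 → h' ∈ J ν.length → ap h' ν0 = ν1 →
      ∀ w, ν0 <+: w →
      ap s w = ap e (ap ((s*h'*s⁻¹*h'⁻¹) * p * (s*h'*s⁻¹*h'⁻¹)⁻¹ * p⁻¹) (ap r⁻¹ w)) := by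
    intro s h' hs hh' hadm w hw
    set F := (s*h'*s⁻¹*h'⁻¹) * p * (s*h'*s⁻¹*h'⁻¹)⁻¹ * p⁻¹ with hFdef
    have hFmem : F ∈ P₀ := hFP s hs h' hh'
    have hcom : Commute F e := hcomm F hFmem e heP
    have hkey : e * F * e⁻¹ = F := by
      rw [hcom.symm.eq]
      group
    have hpt : ap (e * F * e⁻¹) w = ap F w := by rw [hkey]
    have hsw : ap F w = ap s w := (hFact s h' hs hadm).1 w hw
    have hei : ap e⁻¹ w = ap r⁻¹ w := heinv0 w (hγ0ν0.trans hw)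
    calc ap s w = ap F w := hsw.symm
    _ = ap (e * F * e⁻¹) w := hpt.symm
    _ = ap e (ap F (ap e⁻¹ w)) := by rw [ap_mul, ap_mul]
    _ = ap e (ap F (ap r⁻¹ w)) := by rw [hei]
  -- an admissible h' exists
  obtain ⟨h'c, hh'cJ, hh'c⟩ := hJtrans ν.length hL₂ ν rfl [false] [true] rfl
  have hadmc : ap h'c ν0 = ν1 := hh'c
  -- nontrivial s₀ in R ν0
  have hRν0 : ¬ ∀ x ∈ R ν0, x = (1 : ↥TreeAut) :=
    fun hall => hRne ν0 ((Subgroup.eq_bot_iff_forall _).mpr hall)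
  push_neg at hRν0
  obtain ⟨s₀, hs₀R, hs₀1⟩ := hRν0
  by_cases hcase : νb <+: ν4
  · -- CASE (ii)
    obtain ⟨b, hb⟩ := prefix_succ_exists hcase (by rw [hν4len, hνblen])
    have hpinvν4 : ν <+: ap p⁻¹ ν4 := hpinvνb ▸ ap_prefix p⁻¹ hcase
    have hlενt : (ap p⁻¹ ν4).length = ν.length + 1 := by rw [ap_len, hν4len]
    obtain ⟨b', hb'⟩ := prefix_succ_exists hpinvν4 hlενt
    have hpt : ap p (ν ++ [b']) = ν4 := by rw [← hb']; exact ap_ap_inv p ν4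
    cases b' with
    | false =>
      -- subcase: p maps ν0 to ν4
      have hpν0 : ap p ν0 = ν4 := hpt
      have hpinvν4' : ap p⁻¹ ν4 = ν0 := ap_inv_eq p hpν0
      -- the abelianity master equation
      have habel : ∀ s ∈ R ν0, ∀ w, ν0 <+: w →
          ap s w = ap r (ap p (ap s⁻¹ (ap p⁻¹ (ap r⁻¹ w)))) := by
        intro s hs w hw
        have hm := hmaster s h'c hs hh'cJ hadmc w hw
        set z := ap r⁻¹ w with hzdef
        have hz4 : ν4 <+: z := by
          rw [hzdef, hν4def]
          exact ap_prefix r⁻¹ hw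
        have hzb : νb <+: z := hcase.trans hz4
        have hFz := (hFact s h'c hs hadmc).2.2 z hzb
        have hz0 : ν0 <+: ap p⁻¹ z := hpinvν4' ▸ ap_prefix p⁻¹ hz4
        have hζ'inv := (hζ'facts s h'c hs hadmc).2.2.1 (ap p⁻¹ z) hz0
        rw [hFz, hζ'inv] at hm
        have hres0 : ν0 <+: ap s⁻¹ (ap p⁻¹ z) :=
          rist_cone_preserve ((ristSubgroup ν0).inv_mem (hRrist ν0 hs)) hz0
        have hres4 : ν4 <+: ap p (ap s⁻¹ (ap p⁻¹ z)) := hpν0 ▸ ap_prefix p hres0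
        have hresγ0 : γ0 <+: ap p (ap s⁻¹ (ap p⁻¹ z)) := hν4γ0.trans hres4
        rw [he0 _ hresγ0] at hm
        exact hm
      -- the functional identity
      have hI : ∀ s ∈ R ν0, ∀ y, ν0 <+: y →
          ap s (ap r (ap p y)) = ap r (ap p (ap s⁻¹ y)) := by
        intro s hs y hy
        have hpy : ν4 <+: ap p y := hpν0 ▸ ap_prefix p hy
        have hw : ν0 <+: ap r (ap p y) := by
          rw [← hrν4]
          exact ap_prefix r hpy
        have := habel s hs _ hw
        rwa [ap_inv_ap, ap_inv_ap] at this
      -- all elements of R ν0 commute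
      have hab : ∀ s₁ ∈ R ν0, ∀ s₂ ∈ R ν0, Commute s₁ s₂ := by
        intro s₁ hs₁ s₂ hs₂
        apply commute_of_pointwise
        intro w
        by_cases hw : ν0 <+: w
        · have h12 : ap (s₁ * s₂) w = ap r (ap p (ap (s₁*s₂)⁻¹ (ap p⁻¹ (ap r⁻¹ w)))) :=
            habel (s₁ * s₂) (mul_mem hs₁ hs₂) w hw
          set y0 := ap p⁻¹ (ap r⁻¹ w) with hy0def
          have hz4 : ν4 <+: ap r⁻¹ w := by rw [hν4def]; exact ap_prefix r⁻¹ hw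
          have hy00 : ν0 <+: y0 := by
            rw [hy0def, ← hpinvν4']
            exact ap_prefix p⁻¹ hz4
          have hinv : ap (s₁*s₂)⁻¹ y0 = ap s₂⁻¹ (ap s₁⁻¹ y0) := by
            rw [mul_inv_rev, ap_mul]
          have hy1 : ν0 <+: ap s₁⁻¹ y0 :=
            rist_cone_preserve ((ristSubgroup ν0).inv_mem (hRrist ν0 hs₁)) hy00
          have st2 : ap r (ap p (ap s₂⁻¹ (ap s₁⁻¹ y0)))
              = ap s₂ (ap r (ap p (ap s₁⁻¹ y0))) := (hI s₂ hs₂ _ hy1).symm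
          have st1 : ap r (ap p (ap s₁⁻¹ y0)) = ap s₁ (ap r (ap p y0)) :=
            (hI s₁ hs₁ _ hy00).symm
          have hy0w : ap r (ap p y0) = w := by
            rw [hy0def, ap_ap_inv, ap_ap_inv]
          have : ap (s₁ * s₂) w = ap s₂ (ap s₁ w) := by
            rw [h12, hinv, st2, st1, hy0w]
          rw [ap_mul] at this
          exact this
        · have hnos : ∀ s' : ↥TreeAut, s' ∈ R ν0 → ap s' w = w := fun s' hs' =>
            mem_rist (hRrist ν0 hs') w hw
          rw [hnos s₂ hs₂, hnos s₁ hs₁, hnos s₂ hs₂]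
      -- contradiction with the nonabelian-rist fact
      obtain ⟨α, hαm⟩ := exists_moved hs₀1
      have hα0 : ν0 <+: α := rist_moved_prefix (hRrist ν0 hs₀R) hαm
      have hRα : ¬ ∀ x ∈ R α, x = (1 : ↥TreeAut) :=
        fun hall => hRne α ((Subgroup.eq_bot_iff_forall _).mpr hall)
      push_neg at hRα
      obtain ⟨b2, hb2R, hb21⟩ := hRα
      have hb2ν0 : b2 ∈ R ν0 := hRmono ν0 α hα0 hb2R
      have hcom : Commute s₀ b2 := hab s₀ hs₀R b2 hb2ν0
      have hconj : s₀ * b2 * s₀⁻¹ = b2 := by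
        rw [hcom.eq]
        group
      have hb2conj : b2 ∈ ristSubgroup (ap s₀ α) := by
        rw [← hconj]
        exact conj_rist (hRrist α hb2R)
      obtain ⟨m, hmm⟩ := exists_moved hb21
      have hmα : α <+: m := rist_moved_prefix (hRrist α hb2R) hmm
      have hmα' : ap s₀ α <+: m := rist_moved_prefix hb2conj hmm
      exact cones_disjoint_of_ne (ap_len s₀ α) hαm hmα' hmα
    | true =>
      -- subcase: p maps ν1 to ν4
      have hpν1 : ap p ν1 = ν4 := hpt
      have hpinvν4' : ap p⁻¹ ν4 = ν1 := ap_inv_eq p hpν1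
      -- the master equation with h' inside
      have hmaster2 : ∀ s ∈ R ν0, ∀ h' ∈ J ν.length, ap h' ν0 = ν1 →
          ∀ w, ν0 <+: w →
          ap s w = ap r (ap p (ap h' (ap s (ap h'⁻¹ (ap p⁻¹ (ap r⁻¹ w)))))) := by
        intro s hs h' hh' hadm w hw
        have hm := hmaster s h' hs hh' hadm w hw
        set z := ap r⁻¹ w with hzdef
        have hz4 : ν4 <+: z := by
          rw [hzdef, hν4def]
          exact ap_prefix r⁻¹ hw
        have hzb : νb <+: z := hcase.trans hz4
        have hFz := (hFact s h' hs hadm).2.2 z hzb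
        have hz1 : ν1 <+: ap p⁻¹ z := hpinvν4' ▸ ap_prefix p⁻¹ hz4
        have hζ'inv := (hζ'facts s h' hs hadm).2.2.2 (ap p⁻¹ z) hz1
        rw [hFz, hζ'inv] at hm
        -- the inner result is below ν1, hence its p-image below ν4 ⊆ γ0-cone
        have hinvh' : ap h'⁻¹ ν1 = ν0 := ap_inv_eq h' hadm
        have ht0 : ν0 <+: ap h'⁻¹ (ap p⁻¹ z) := hinvh' ▸ ap_prefix h'⁻¹ hz1
        have ht0' : ν0 <+: ap s (ap h'⁻¹ (ap p⁻¹ z)) :=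
          rist_cone_preserve (hRrist ν0 hs) ht0
        have ht1 : ν1 <+: ap h' (ap s (ap h'⁻¹ (ap p⁻¹ z))) :=
          hadm ▸ ap_prefix h' ht0'
        have ht4 : ν4 <+: ap p (ap h' (ap s (ap h'⁻¹ (ap p⁻¹ z)))) :=
          hpν1 ▸ ap_prefix p ht1
        rw [he0 _ (hν4γ0.trans ht4)] at hm
        exact hm
      -- two admissible elements give the same conjugated action
      have hcons : ∀ s ∈ R ν0, ∀ h'₁ ∈ J ν.length, ∀ h'₂ ∈ J ν.length,
          ap h'₁ ν0 = ν1 → ap h'₂ ν0 = ν1 → ∀ y, ν1 <+: y →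
          ap h'₁ (ap s (ap h'₁⁻¹ y)) = ap h'₂ (ap s (ap h'₂⁻¹ y)) := by
        intro s hs h'₁ hJ1 h'₂ hJ2 hadm1 hadm2 y hy
        have hpy : ν4 <+: ap p y := hpν1 ▸ ap_prefix p hy
        have hw : ν0 <+: ap r (ap p y) := by
          rw [← hrν4]
          exact ap_prefix r hpy
        have e1 := hmaster2 s hs h'₁ hJ1 hadm1 _ hw
        have e2 := hmaster2 s hs h'₂ hJ2 hadm2 _ hw
        rw [ap_inv_ap, ap_inv_ap] at e1 e2
        have := e1.symm.trans e2
        exact ap_inj p (ap_inj r this)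
      -- kill: a nontrivial element of R (ν0 ++ [false]) must be trivial
      set ν00 := ν0 ++ [false] with hν00def
      have hRν00 : ¬ ∀ x ∈ R ν00, x = (1 : ↥TreeAut) :=
        fun hall => hRne ν00 ((Subgroup.eq_bot_iff_forall _).mpr hall)
      push_neg at hRν00
      obtain ⟨s, hsR00, hs1⟩ := hRν00
      have hsR0 : s ∈ R ν0 := hRmono ν0 ν00 (prefix_child false) hsR00
      obtain ⟨m, hmm⟩ := exists_moved hs1
      have hm00 : ν00 <+: m := rist_moved_prefix (hRrist ν00 hsR00) hmm
      have hmν : ν <+: m := ((prefix_child false).trans (prefix_child false)).trans hm00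
      obtain ⟨σm, hσm⟩ := hmν
      have hσ2 : [false, false] <+: σm := by
        have : ν ++ [false, false] <+: ν ++ σm := by
          rw [hσm]
          have : ν ++ [false, false] = ν00 := by simp [hν00def, hν0def]
          rw [this]
          exact hm00
        exact append_prefix_append.1 this
      have hσlen : 2 ≤ σm.length := hσ2.length_le
      set τ₁ : Word := false :: true :: List.replicate (σm.length - 2) false with hτ₁def
      set τy : Word := true :: List.replicate (σm.length - 1) false with hτydef
      have hlen1 : τ₁.length = τy.length := by
        simp [hτ₁def, hτydef]
        omega
      have hlen2 : σm.length = τy.length := by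
        simp [hτydef]
        omega
      obtain ⟨h'₁, hJ1, he1⟩ := hJtrans ν.length hL₂ ν rfl τ₁ τy hlen1
      obtain ⟨h'₂, hJ2, he2⟩ := hJtrans ν.length hL₂ ν rfl σm τy hlen2
      set x₁ := ν ++ τ₁ with hx₁def
      set y := ν ++ τy with hydef
      have hyν1 : ν1 <+: y := by
        rw [hydef, hν1def, hτydef]
        exact append_prefix_append.2 ⟨_, rfl⟩
      have hx₁ν0 : ν0 <+: x₁ := by
        rw [hx₁def, hν0def, hτ₁def]
        exact append_prefix_append.2 ⟨_, rfl⟩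
      have hmν0 : ν0 <+: m := (prefix_child false).trans hm00
      have hadm1 : ap h'₁ ν0 = ν1 := adm_lemma h'₁ x₁ y hx₁ν0 hyν1 he1
      have hadm2 : ap h'₂ ν0 = ν1 := by
        apply adm_lemma h'₂ m y hmν0 hyν1
        rw [← hσm]
        exact he2
      have hcx := hcons s hsR0 h'₁ hJ1 h'₂ hJ2 hadm1 hadm2 y hyν1
      have hinv1 : ap h'₁⁻¹ y = x₁ := ap_inv_eq h'₁ he1
      have hinv2 : ap h'₂⁻¹ y = m := by
        apply ap_inv_eq h'₂
        rw [← hσm]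
        exact he2
      have hsx₁ : ap s x₁ = x₁ := by
        apply mem_rist (hRrist ν00 hsR00)
        have hid : ν00 = ν ++ [false, false] := by simp [hν00def, hν0def]
        rw [hid, hx₁def, hτ₁def]
        intro hc
        have := append_prefix_append.1 hc
        simp [List.cons_prefix_cons] at this
      rw [hinv1, hinv2, hsx₁, he1] at hcx
      have : ap s m = m := by
        apply ap_inj h'₂
        rw [hσm] at he2
        rw [he2]
        exact hcx.symm
      exact hmm this
  · -- CASE (i): the cone of ν4 misses the support of F
    obtain ⟨w₀, hw₀m⟩ := exists_moved hs₀1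
    have hw₀0 : ν0 <+: w₀ := rist_moved_prefix (hRrist ν0 hs₀R) hw₀m
    set z := ap r⁻¹ w₀ with hzdef
    have hz4 : ν4 <+: z := by
      rw [hzdef, hν4def]
      exact ap_prefix r⁻¹ hw₀0
    have hnν : ¬ ν <+: z := fun hc => hdisj z hc hz4
    have hnνb : ¬ νb <+: z := by
      intro hc
      rcases prefix_comparable hc hz4 with h | h
      · exact hcase h
      · have := h.length_le
        rw [hν4len, hνblen] at this
        omega
    have hFz := (hFact s₀ h'c hs₀R hadmc).2.1 z hnν hnνb
    have hm := hmaster s₀ h'c hs₀R hh'cJ hadmc w₀ hw₀0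
    rw [← hzdef, hFz] at hm
    have hzγ0 : γ0 <+: z := hν4γ0.trans hz4
    rw [he0 z hzγ0, hzdef, ap_ap_inv] at hm
    exact hw₀m hm


end St14

namespace St14

section Main

variable (G₁ G₂ : Subgroup ↥TreeAut) (φ : ↥G₁ ≃* ↥G₂)

/-- the image of `g` in `Aut(X*)` under `φ` -/
def Phi (g : ↥G₁) : ↥TreeAut := ((φ g : ↥G₂) : ↥TreeAut)

lemma Phi_mul (g h : ↥G₁) : Phi G₁ G₂ φ (g * h) = Phi G₁ G₂ φ g * Phi G₁ G₂ φ h := by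
  simp [Phi]

lemma Phi_inv (g : ↥G₁) : Phi G₁ G₂ φ g⁻¹ = (Phi G₁ G₂ φ g)⁻¹ := by
  simp [Phi]

lemma Phi_ne_one {g : ↥G₁} (h : (g : ↥TreeAut) ≠ 1) : Phi G₁ G₂ φ g ≠ 1 := by
  intro hc
  apply h
  have h2 : (φ g : ↥G₂) = 1 := Subtype.ext hc
  have h3 : φ g = 1 := Subtype.ext (congrArg _ h2)
  have h4 : g = 1 := by
    have := congrArg φ.symm h3
    simpa using this
  rw [h4]
  rfl

lemma coe_commute_lift {a b : ↥G₁} (h : Commute (a : ↥TreeAut) (b : ↥TreeAut)) :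
    Commute a b := by
  have : a * b = b * a := Subtype.ext (by exact_mod_cast h.eq)
  exact this

lemma commute_phi_of_coe {a b : ↥G₁} (h : Commute (a : ↥TreeAut) (b : ↥TreeAut)) :
    Commute (Phi G₁ G₂ φ a) (Phi G₁ G₂ φ b) := by
  have h1 : Commute a b := coe_commute_lift G₁ h
  have h2 : φ a * φ b = φ b * φ a := by
    rw [← map_mul, ← map_mul, h1.eq]
  have h3 : ((φ a * φ b : ↥G₂) : ↥TreeAut) = ((φ b * φ a : ↥G₂) : ↥TreeAut) := by
    rw [h2]
  show Phi G₁ G₂ φ a * Phi G₁ G₂ φ b = Phi G₁ G₂ φ b * Phi G₁ G₂ φ a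
  unfold Phi
  push_cast at h3
  exact h3

lemma coe_commute_of_phi {a b : ↥G₁}
    (h : Commute (Phi G₁ G₂ φ a) (Phi G₁ G₂ φ b)) :
    Commute (a : ↥TreeAut) (b : ↥TreeAut) := by
  have h3 : ((φ a * φ b : ↥G₂) : ↥TreeAut) = ((φ b * φ a : ↥G₂) : ↥TreeAut) := by
    push_cast
    exact h.eq
  have h2 : φ a * φ b = φ b * φ a := Subtype.coe_injective h3
  have h1 : a * b = b * a := by
    have : φ (a * b) = φ (b * a) := by
      rw [map_mul, map_mul, h2]
    have := congrArg φ.symm this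
    simpa using this
  have : ((a * b : ↥G₁) : ↥TreeAut) = ((b * a : ↥G₁) : ↥TreeAut) := by rw [h1]
  push_cast at this
  exact this

/-- weak branch witness as a subtype element -/
lemma wb_witness (h1 : WeaklyBranch G₁) (u : Word) :
    ∃ g : ↥G₁, (g : ↥TreeAut) ∈ ristSubgroup u ∧ (g : ↥TreeAut) ≠ 1 := by
  have := h1.2 u
  have hne : ¬ ∀ x ∈ G₁ ⊓ ristSubgroup u, x = (1 : ↥TreeAut) :=
    fun hall => this ((Subgroup.eq_bot_iff_forall _).mpr hall)
  push_neg at hne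
  obtain ⟨x, hx, hx1⟩ := hne
  exact ⟨⟨x, hx.1⟩, hx.2, hx1⟩

/-- the edge relation at level `n`: the image of the rigid stabilizer of `v`
acts nontrivially in the cone of `c` -/
def Edge (n : ℕ) (v c : Word) : Prop :=
  v.length = n ∧ c.length = n ∧
  ∃ g : ↥G₁, (g : ↥TreeAut) ∈ ristSubgroup v ∧
    ∃ w, c <+: w ∧ ap (Phi G₁ G₂ φ g) w ≠ w

/-- the inductive package at level `n` -/
def Pkg (n : ℕ) : Prop :=
  (∀ v : Word, v.length = n → ∃ c, Edge G₁ G₂ φ n v c) ∧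
  (∀ v c c', Edge G₁ G₂ φ n v c → Edge G₁ G₂ φ n v c' → c = c') ∧
  (∀ v v' c, Edge G₁ G₂ φ n v c → Edge G₁ G₂ φ n v' c → v = v') ∧
  (∀ c : Word, c.length = n → ∃ v, Edge G₁ G₂ φ n v c)

/-- edges transport along the group action -/
lemma edge_transport {n : ℕ} {v c : Word} (hE : Edge G₁ G₂ φ n v c) (x : ↥G₁) :
    Edge G₁ G₂ φ n (ap (x : ↥TreeAut) v) (ap (Phi G₁ G₂ φ x) c) := by
  obtain ⟨hv, hc, g, hg, w, hw, hmoved⟩ := hE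
  refine ⟨by rw [ap_len]; exact hv, by rw [ap_len]; exact hc, x * g * x⁻¹, ?_, ?_⟩
  · have : ((x * g * x⁻¹ : ↥G₁) : ↥TreeAut)
        = (x : ↥TreeAut) * (g : ↥TreeAut) * (x : ↥TreeAut)⁻¹ := by
      push_cast
      ring_nf
    rw [this]
    exact conj_rist hg
  · refine ⟨ap (Phi G₁ G₂ φ x) w, ap_prefix _ hw, ?_⟩
    have hPhi : Phi G₁ G₂ φ (x * g * x⁻¹)
        = Phi G₁ G₂ φ x * Phi G₁ G₂ φ g * (Phi G₁ G₂ φ x)⁻¹ := by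
      rw [Phi_mul, Phi_mul, Phi_inv]
    rw [hPhi]
    intro hcon
    apply hmoved
    have : ap (Phi G₁ G₂ φ x) (ap (Phi G₁ G₂ φ g) w) = ap (Phi G₁ G₂ φ x) w := by
      have e1 : ap (Phi G₁ G₂ φ x * Phi G₁ G₂ φ g * (Phi G₁ G₂ φ x)⁻¹)
          (ap (Phi G₁ G₂ φ x) w)
          = ap (Phi G₁ G₂ φ x) (ap (Phi G₁ G₂ φ g) w) := by
        rw [show Phi G₁ G₂ φ x * Phi G₁ G₂ φ g * (Phi G₁ G₂ φ x)⁻¹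
          = Phi G₁ G₂ φ x * (Phi G₁ G₂ φ g * (Phi G₁ G₂ φ x)⁻¹) by group]
        rw [ap_mul, ap_mul, ap_inv_ap]
      rw [← e1, hcon]
    exact ap_inj _ this

end Main

end St14

namespace St14

section Main2

variable (G₁ G₂ : Subgroup ↥TreeAut) (φ : ↥G₁ ≃* ↥G₂)

lemma rist_fixesLevel {x : ↥TreeAut} {v : Word} {n : ℕ} (hx : x ∈ ristSubgroup v)
    (hv : v.length = n) : fixesLevel x n := by
  intro w hw
  by_cases hwv : w = v
  · rw [hwv]
    exact rist_fix_self hx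
  · exact mem_rist hx w (not_prefix_of_ne (by omega) (fun hc => hwv hc.symm))

lemma phi_symm_Phi (y : ↥G₂) : Phi G₁ G₂ φ (φ.symm y) = (y : ↥TreeAut) := by
  simp [Phi]

lemma pkg_fixlevel {n : ℕ} (hP : Pkg G₁ G₂ φ n) {g : ↥G₁}
    (hfix : fixesLevel (g : ↥TreeAut) n) : fixesLevel (Phi G₁ G₂ φ g) n := by
  intro c hc
  obtain ⟨v, hE⟩ := hP.2.2.2 c hc
  have hE2 := edge_transport G₁ G₂ φ hE g
  rw [hfix v hE.1] at hE2
  exact (hP.2.1 v c _ hE hE2).symm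

lemma pkg_fixlevel' {n : ℕ} (hP : Pkg G₁ G₂ φ n) {g : ↥G₁}
    (hfix : fixesLevel (Phi G₁ G₂ φ g) n) : fixesLevel (g : ↥TreeAut) n := by
  intro v hv
  obtain ⟨c, hE⟩ := hP.1 v hv
  have hE2 := edge_transport G₁ G₂ φ hE g
  rw [hfix c hE.2.1] at hE2
  exact (hP.2.2.1 v _ c hE hE2).symm

/-- purity: the `φ`-image of the rigid stabilizer of `v` is supported in the cone
of the matched vertex `c` -/
lemma pkg_purity {n : ℕ} (hP : Pkg G₁ G₂ φ n) {v c : Word}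
    (hE : Edge G₁ G₂ φ n v c) {g : ↥G₁} (hg : (g : ↥TreeAut) ∈ ristSubgroup v) :
    Phi G₁ G₂ φ g ∈ ristSubgroup c := by
  intro w hw
  by_contra hm
  have hfixn : fixesLevel (Phi G₁ G₂ φ g) n :=
    pkg_fixlevel G₁ G₂ φ hP (rist_fixesLevel hg hE.1)
  by_cases hlen : w.length ≤ n
  · have hext : ap (Phi G₁ G₂ φ g) (w ++ List.replicate (n - w.length) false)
        ≠ w ++ List.replicate (n - w.length) false :=
      moved_desc hm (List.prefix_append _ _)
    exact hext (hfixn _ (by simp; omega))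
  · push_neg at hlen
    have htl : (w.take n).length = n := by
      rw [List.length_take]
      omega
    have hE2 : Edge G₁ G₂ φ n v (w.take n) :=
      ⟨hE.1, htl, g, hg, w, List.take_prefix n w, hm⟩
    have := hP.2.1 v c (w.take n) hE hE2
    exact hw (this ▸ List.take_prefix n w)

/-- dual purity: the `φ`-preimage of the rigid stabilizer of `c` is supported in the
cone of `v` -/
lemma pkg_dual {n : ℕ} (hP : Pkg G₁ G₂ φ n) (h1 : WeaklyBranch G₁)
    {v c : Word} (hE : Edge G₁ G₂ φ n v c) {y : ↥G₂}
    (hy : (y : ↥TreeAut) ∈ ristSubgroup c) :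
    ((φ.symm y : ↥G₁) : ↥TreeAut) ∈ ristSubgroup v := by
  set d := φ.symm y with hddef
  have hdfix : fixesLevel (d : ↥TreeAut) n := by
    apply pkg_fixlevel' G₁ G₂ φ hP
    rw [phi_symm_Phi]
    exact rist_fixesLevel hy hE.2.1
  have htriv : ∀ v' : Word, v'.length = n → v' ≠ v → TrivOn (d : ↥TreeAut) v' := by
    intro v' hv' hne
    apply fact1_hard
    intro w hw
    obtain ⟨z, hzrist, hz1⟩ := wb_witness G₁ h1 w
    refine ⟨(z : ↥TreeAut), hzrist, hz1, ?_⟩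
    obtain ⟨c', hE'⟩ := hP.1 v' hv'
    have hzc' : Phi G₁ G₂ φ z ∈ ristSubgroup c' :=
      pkg_purity G₁ G₂ φ hP hE' (rist_mono hw hzrist)
    have hcc' : c' ≠ c := by
      intro hcon
      exact hne (hP.2.2.1 v' v c (hcon ▸ hE') hE)
    have hcomm2 : Commute (y : ↥TreeAut) (Phi G₁ G₂ φ z) :=
      disjoint_rist_commute hy hzc'
        (not_prefix_of_ne (by rw [hE.2.1, hE'.2.1]) (Ne.symm hcc'))
        (not_prefix_of_ne (by rw [hE.2.1, hE'.2.1]) hcc')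
    have : Commute (Phi G₁ G₂ φ d) (Phi G₁ G₂ φ z) := by
      rw [hddef, phi_symm_Phi]
      exact hcomm2
    exact coe_commute_of_phi G₁ G₂ φ this
  intro w hw
  by_cases hlen : w.length ≤ n
  · exact fixesLevel_fixes hdfix hlen
  · push_neg at hlen
    have htl : (w.take n).length = n := by
      rw [List.length_take]
      omega
    have hne : w.take n ≠ v := by
      intro hc
      exact hw (hc ▸ List.take_prefix n w)
    exact htriv (w.take n) htl hne w (List.take_prefix n w)

end Main2

end St14

namespace St14

section Main3

variable (G₁ G₂ : Subgroup ↥TreeAut) (φ : ↥G₁ ≃* ↥G₂)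

/-- the `φ`-preimage of the rigid stabilizer of `cb`, as a subgroup of `Aut(X*)` -/
def pull (cb : Word) : Subgroup ↥TreeAut :=
  (((ristSubgroup cb).comap G₂.subtype).comap φ.toMonoidHom).map G₁.subtype

lemma mem_pull {cb : Word} {x : ↥TreeAut} :
    x ∈ pull G₁ G₂ φ cb ↔
    ∃ g : ↥G₁, Phi G₁ G₂ φ g ∈ ristSubgroup cb ∧ (g : ↥TreeAut) = x := by
  simp only [pull, Subgroup.mem_map, Subgroup.mem_comap]
  constructor
  · rintro ⟨g, hg, rfl⟩
    exact ⟨g, hg, rfl⟩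
  · rintro ⟨g, hg, rfl⟩
    exact ⟨g, hg, rfl⟩

lemma pull_conj_mem {cb : Word} {a : ↥G₁} (ha : ap (Phi G₁ G₂ φ a) cb = cb)
    {p : ↥TreeAut} (hp : p ∈ pull G₁ G₂ φ cb) :
    (a : ↥TreeAut) * p * (a : ↥TreeAut)⁻¹ ∈ pull G₁ G₂ φ cb := by
  obtain ⟨g, hg, rfl⟩ := (mem_pull G₁ G₂ φ).1 hp
  refine (mem_pull G₁ G₂ φ).2 ⟨a * g * a⁻¹, ?_, by push_cast; ring⟩
  rw [Phi_mul, Phi_mul, Phi_inv]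
  have := conj_rist (x := Phi G₁ G₂ φ a) hg
  rwa [ha] at this

/-- elements of `pull cb` for two incomparable words commute -/
lemma pull_commute {cb cb' : Word} (h1 : ¬ cb <+: cb') (h2 : ¬ cb' <+: cb)
    {p p' : ↥TreeAut} (hp : p ∈ pull G₁ G₂ φ cb) (hp' : p' ∈ pull G₁ G₂ φ cb') :
    Commute p p' := by
  obtain ⟨g, hg, rfl⟩ := (mem_pull G₁ G₂ φ).1 hp
  obtain ⟨g', hg', rfl⟩ := (mem_pull G₁ G₂ φ).1 hp'
  exact coe_commute_of_phi G₁ G₂ φ (disjoint_rist_commute hg hg' h1 h2)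

/-- spreading: a subgroup normalized by level-`L` saturation elements which moves a
word below `x₀` (a word of length `L`) moves words below every `x` in the cone -/
lemma spreading (P : Subgroup ↥TreeAut) (L : ℕ) (H : ℕ → Subgroup ↥G₁)
    (hnorm : ∀ hg1 ∈ H L, ∀ p ∈ P, (hg1 : ↥TreeAut) * p * ((hg1 : ↥G₁) : ↥TreeAut)⁻¹ ∈ P)
    (x₀ : Word) (hx₀ : x₀.length = L)
    (htr : LevelTransitiveOn ((fun x : ↥G₁ => (x : ↥TreeAut)) '' (H L : Set ↥G₁)) x₀)
    (hmove : ∃ p ∈ P, ∃ w, x₀ <+: w ∧ ap p w ≠ w) :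
    ∀ x, x₀ <+: x → ∃ p ∈ P, ∃ w, x <+: w ∧ ap p w ≠ w := by
  obtain ⟨p, hpP, w, hx₀w, hmw⟩ := hmove
  intro x hx₀x
  set ℓ := max w.length x.length with hℓdef
  set w₂ := w ++ List.replicate (ℓ - w.length) false with hw₂def
  set t := x ++ List.replicate (ℓ - x.length) false with htdef
  have hmw₂ : ap p w₂ ≠ w₂ := moved_desc hmw (List.prefix_append _ _)
  have hw₂len : w₂.length = ℓ := by
    simp [hw₂def]
    omega
  have htlen : t.length = ℓ := by
    simp [htdef]
    omega
  have hx₀w₂ : x₀ <+: w₂ := hx₀w.trans (List.prefix_append _ _)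
  have hx₀t : x₀ <+: t := hx₀x.trans (List.prefix_append _ _)
  obtain ⟨σ₁, hσ₁⟩ := hx₀w₂
  obtain ⟨σ₂, hσ₂⟩ := hx₀t
  have hσlen : σ₁.length = σ₂.length := by
    have l1 : x₀.length + σ₁.length = ℓ := by rw [← hw₂len, ← hσ₁]; simp
    have l2 : x₀.length + σ₂.length = ℓ := by rw [← htlen, ← hσ₂]; simp
    omega
  obtain ⟨gel, hgel, hmap⟩ := htr σ₁ σ₂ hσlen
  obtain ⟨ht, hhtH, rfl⟩ := hgel
  rw [hσ₁] at hmap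
  rw [hσ₂] at hmap
  have hinvt : ap ((ht : ↥TreeAut))⁻¹ t = w₂ := ap_inv_eq _ hmap
  refine ⟨(ht : ↥TreeAut) * p * ((ht : ↥G₁) : ↥TreeAut)⁻¹, hnorm ht hhtH p hpP, t,
    List.prefix_append _ _, ?_⟩
  have hchain : ap ((ht : ↥TreeAut) * p * ((ht : ↥G₁) : ↥TreeAut)⁻¹) t
      = ap (ht : ↥TreeAut) (ap p w₂) := by
    rw [show (ht : ↥TreeAut) * p * ((ht : ↥G₁) : ↥TreeAut)⁻¹
      = (ht : ↥TreeAut) * (p * ((ht : ↥G₁) : ↥TreeAut)⁻¹) by group]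
    rw [ap_mul, ap_mul, hinvt]
  rw [hchain]
  intro hcon
  apply hmw₂
  apply ap_inj (ht : ↥TreeAut)
  rw [hcon, hmap]

end Main3

end St14

namespace St14

lemma cone_cases {c w : Word} (h : c <+: w) :
    w = c ∨ (c ++ [false]) <+: w ∨ (c ++ [true]) <+: w := by
  obtain ⟨σ, rfl⟩ := h
  cases σ with
  | nil => left; simp
  | cons x σ' =>
    right
    cases x
    · left
      have : [false] <+: (false :: σ') := by simp [List.cons_prefix_cons]
      exact append_prefix_append.2 this
    · right
      have : [true] <+: (true :: σ') := by simp [List.cons_prefix_cons]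
      exact append_prefix_append.2 this

lemma rist_trivon_children {x : ↥TreeAut} {c : Word} (hx : x ∈ ristSubgroup c)
    (h0 : TrivOn x (c ++ [false])) (h1 : TrivOn x (c ++ [true])) : x = 1 := by
  apply treeaut_ext
  intro w
  rw [ap_one]
  by_cases hc : c <+: w
  · rcases cone_cases hc with rfl | hh | hh
    · exact rist_fix_self hx
    · exact h0 w hh
    · exact h1 w hh
  · exact mem_rist hx w hc

section Main4

variable (G₁ G₂ : Subgroup ↥TreeAut) (φ : ↥G₁ ≃* ↥G₂)

lemma machine_pull (h1 : WeaklyBranch G₁) (H : ℕ → Subgroup ↥G₁)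
    (hH2 : ∀ n, ∀ h ∈ H n, fixesLevel (Phi G₁ G₂ φ h) n)
    (hH3 : ∀ n, ∀ v : Word, v.length = n →
      LevelTransitiveOn ((fun x : ↥G₁ => (x : ↥TreeAut)) '' (H n : Set ↥G₁)) v)
    (n : ℕ) (cb0 cb1 : Word) (hlen0 : cb0.length = n + 1) (hlen1 : cb1.length = n + 1)
    (hne : cb0 ≠ cb1)
    (x₀ : Word)
    (hA : ∀ x : Word, x₀ <+: x →
      (∃ p ∈ pull G₁ G₂ φ cb0, ∃ w, x <+: w ∧ ap p w ≠ w) ∧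
      (∃ q ∈ pull G₁ G₂ φ cb1, ∃ w, x <+: w ∧ ap q w ≠ w)) : False := by
  apply machine (pull G₁ G₂ φ cb0) (pull G₁ G₂ φ cb1)
    (fun L => (fun x : ↥G₁ => (x : ↥TreeAut)) '' (H L : Set ↥G₁))
    (fun u => G₁ ⊓ ristSubgroup u) (n + 1)
    ?_ ?_ ?_ ?_ ?_ ?_ x₀ hA
  · intro L _ v hv s t hst
    exact hH3 L v hv s t hst
  · intro u
    exact inf_le_right
  · intro u
    exact h1.2 u
  · intro u u' h
    exact le_inf inf_le_left (inf_le_right.trans (rist_mono h))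
  · intro u r hr L hL h hh p
    obtain ⟨ht, hhtH, rfl⟩ := hh
    set rt : ↥G₁ := ⟨r, hr.1⟩ with hrt
    have hrcoe : r = (rt : ↥TreeAut) := rfl
    set a : ↥G₁ := rt * ht * rt⁻¹ * ht⁻¹ with hadef
    have hacoe : (a : ↥TreeAut)
        = r * (ht : ↥TreeAut) * r⁻¹ * ((ht : ↥G₁) : ↥TreeAut)⁻¹ := by
      rw [hadef, hrcoe]
      push_cast
      ring
    have hPhia : Phi G₁ G₂ φ a = Phi G₁ G₂ φ rt * Phi G₁ G₂ φ ht
        * (Phi G₁ G₂ φ rt)⁻¹ * (Phi G₁ G₂ φ ht)⁻¹ := by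
      rw [hadef, Phi_mul, Phi_mul, Phi_mul, Phi_inv, Phi_inv]
    have hfixL : fixesLevel (Phi G₁ G₂ φ a) L := by
      rw [hPhia]
      exact commutator_fixesLevel (hH2 L ht hhtH)
    constructor
    · intro hp
      have := pull_conj_mem G₁ G₂ φ
        (ha := fixesLevel_fixes hfixL (by omega : cb0.length ≤ L)) hp
      rwa [hacoe] at this
    · intro hp
      have := pull_conj_mem G₁ G₂ φ
        (ha := fixesLevel_fixes hfixL (by omega : cb1.length ≤ L)) hp
      rwa [hacoe] at this
  · intro p hp q hq
    exact pull_commute G₁ G₂ φ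
      (not_prefix_of_ne (by omega) hne) (not_prefix_of_ne (by omega) hne.symm) hp hq

/-- plain normalization of `pull` by saturation elements -/
lemma pull_norm_plain (H : ℕ → Subgroup ↥G₁)
    (hH2 : ∀ n, ∀ h ∈ H n, fixesLevel (Phi G₁ G₂ φ h) n)
    {L : ℕ} {cb : Word} (hlen : cb.length ≤ L) :
    ∀ ht ∈ H L, ∀ p ∈ pull G₁ G₂ φ cb,
      (ht : ↥TreeAut) * p * ((ht : ↥G₁) : ↥TreeAut)⁻¹ ∈ pull G₁ G₂ φ cb := by
  intro ht hht p hp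
  exact pull_conj_mem G₁ G₂ φ (fixesLevel_fixes (hH2 L ht hht) hlen) hp

end Main4

end St14

namespace St14

section Main5

variable (G₁ G₂ : Subgroup ↥TreeAut) (φ : ↥G₁ ≃* ↥G₂)

lemma noswap (h1 : WeaklyBranch G₁) (h2 : WeaklyBranch G₂)
    (H : ℕ → Subgroup ↥G₁)
    (hH2 : ∀ n, ∀ h ∈ H n, fixesLevel (Phi G₁ G₂ φ h) n)
    (hH3a : ∀ n, ∀ v : Word, v.length = n →
      LevelTransitiveOn ((fun x : ↥G₁ => (x : ↥TreeAut)) '' (H n : Set ↥G₁)) v)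
    {n : ℕ} (hP : Pkg G₁ G₂ φ n) {v c : Word} (hE : Edge G₁ G₂ φ n v c) (b : Bool)
    {g : ↥G₁} (hg : (g : ↥TreeAut) ∈ ristSubgroup (v ++ [b]))
    (hswap : ap (Phi G₁ G₂ φ g) (c ++ [false]) = c ++ [true]) : False := by
  classical
  set q := Phi G₁ G₂ φ g with hqdef
  set vb := v ++ [b] with hvbdef
  set vo := v ++ [!b] with hvodef
  set c0 := c ++ [false] with hc0def
  set c1 := c ++ [true] with hc1def
  have hvlen : v.length = n := hE.1
  have hclen : c.length = n := hE.2.1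
  have hvblen : vb.length = n + 1 := by simp [hvbdef, hvlen]
  have hvolen : vo.length = n + 1 := by simp [hvodef, hvlen]
  have hc0len : c0.length = n + 1 := by simp [hc0def, hclen]
  have hc1len : c1.length = n + 1 := by simp [hc1def, hclen]
  have hvbvo : vb ≠ vo := by
    cases b <;> simp [hvbdef, hvodef]
  have hc01 : c0 ≠ c1 := by simp [hc0def, hc1def]
  -- pulls are supported in the cone of v
  have hpull_rist : ∀ (x : Bool), ∀ p ∈ pull G₁ G₂ φ (c ++ [x]), p ∈ ristSubgroup v := by
    intro x p hp
    obtain ⟨g', hg', rfl⟩ := (mem_pull G₁ G₂ φ).1 hp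
    have hgc : Phi G₁ G₂ φ g' ∈ ristSubgroup c := rist_mono (prefix_child x) hg'
    have hres := pkg_dual G₁ G₂ φ hP h1 hE (y := φ g') hgc
    rwa [MulEquiv.symm_apply_apply] at hres
  -- q maps c1 back to c0
  have hqc : q ∈ ristSubgroup c :=
    pkg_purity G₁ G₂ φ hP hE (rist_mono (prefix_child b) hg)
  have hq_c1 : ap q c1 = c0 := by
    have hpre : c <+: ap q c1 := rist_cone_preserve hqc (prefix_child true)
    have hlen : (ap q c1).length = c.length + 1 := by
      rw [ap_len]
      simp [hc1def]
    obtain ⟨x', hx'⟩ := prefix_succ_exists hpre hlen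
    cases x' with
    | false => exact hx'
    | true =>
      exfalso
      have : ap q c0 = ap q c1 := by rw [hswap, hx']
      have := ap_inj q this
      simp [hc0def, hc1def] at this
  have hqinv_c1 : ap q⁻¹ c1 = c0 := ap_inv_eq q hswap
  -- conjugation moves pull c0 to pull c1 and back
  have hconj01 : ∀ p ∈ pull G₁ G₂ φ c0,
      (g : ↥TreeAut) * p * (g : ↥TreeAut)⁻¹ ∈ pull G₁ G₂ φ c1 := by
    intro p hp
    obtain ⟨g', hg', rfl⟩ := (mem_pull G₁ G₂ φ).1 hp
    refine (mem_pull G₁ G₂ φ).2 ⟨g * g' * g⁻¹, ?_, by push_cast; ring⟩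
    rw [Phi_mul, Phi_mul, Phi_inv]
    have := conj_rist (x := q) hg'
    rwa [hswap] at this
  have hconj10 : ∀ p ∈ pull G₁ G₂ φ c1,
      (g : ↥TreeAut)⁻¹ * p * (g : ↥TreeAut) ∈ pull G₁ G₂ φ c0 := by
    intro p hp
    obtain ⟨g', hg', rfl⟩ := (mem_pull G₁ G₂ φ).1 hp
    refine (mem_pull G₁ G₂ φ).2 ⟨g⁻¹ * g' * g, ?_, by push_cast; ring⟩
    have hPhi : Phi G₁ G₂ φ (g⁻¹ * g' * g) = q⁻¹ * Phi G₁ G₂ φ g' * (q⁻¹)⁻¹ := by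
      rw [Phi_mul, Phi_mul, Phi_inv, hqdef]
      group
    rw [hPhi]
    have := conj_rist (x := q⁻¹) hg'
    rwa [hqinv_c1] at this
  by_cases hact : ∃ p ∈ pull G₁ G₂ φ c0, ∃ w, vo <+: w ∧ ap p w ≠ w
  · -- both pulls act below vo : run the machine
    have hspread0 := spreading G₁ (pull G₁ G₂ φ c0) (n+1) H
      (pull_norm_plain G₁ G₂ φ H hH2 (le_of_eq hc0len))
      vo hvolen (hH3a (n+1) vo hvolen) hact
    apply machine_pull G₁ G₂ φ h1 H hH2 hH3a n c0 c1 hc0len hc1len hc01 vo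
    intro x hx
    refine ⟨hspread0 x hx, ?_⟩
    obtain ⟨p, hp, w, hxw, hmw⟩ := hspread0 x hx
    have hvow : vo <+: w := hx.trans hxw
    have hnb : ¬ vb <+: w := fun hcon =>
      cones_disjoint_of_ne (by omega) hvbvo hcon hvow
    have hgw : ap (g : ↥TreeAut) w = w := mem_rist hg w hnb
    have hgWinv : ap (g : ↥TreeAut)⁻¹ w = w := by
      conv_lhs => rw [← hgw]
      rw [ap_inv_ap]
    refine ⟨(g : ↥TreeAut) * p * (g : ↥TreeAut)⁻¹, hconj01 p hp, w, hxw, ?_⟩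
    have : ap ((g : ↥TreeAut) * p * (g : ↥TreeAut)⁻¹) w
        = ap (g : ↥TreeAut) (ap p w) := by
      rw [show (g : ↥TreeAut) * p * (g : ↥TreeAut)⁻¹
        = (g : ↥TreeAut) * (p * (g : ↥TreeAut)⁻¹) by group, ap_mul, ap_mul, hgWinv]
    rw [this]
    intro hcon
    apply hmw
    apply ap_inj (g : ↥TreeAut)
    rw [hcon, hgw]
  · -- both pulls are trivial below vo
    push_neg at hact
    have hact1 : ∀ p ∈ pull G₁ G₂ φ c1, ∀ w, vo <+: w → ap p w = w := by
      intro p hp w hw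
      have hp0 := hconj10 p hp
      have h0 := hact _ hp0 w hw
      have hnb : ¬ vb <+: w := fun hcon =>
        cones_disjoint_of_ne (by omega) hvbvo hcon hw
      have hgw : ap (g : ↥TreeAut) w = w := mem_rist hg w hnb
      have : ap ((g : ↥TreeAut)⁻¹ * p * (g : ↥TreeAut)) w
          = ap (g : ↥TreeAut)⁻¹ (ap p w) := by
        rw [show (g : ↥TreeAut)⁻¹ * p * (g : ↥TreeAut)
          = (g : ↥TreeAut)⁻¹ * (p * (g : ↥TreeAut)) by group, ap_mul, ap_mul, hgw]
      rw [this] at h0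
      have := congrArg (ap (g : ↥TreeAut)) h0
      rwa [ap_ap_inv, hgw] at this
    have hactx : ∀ (x : Bool), ∀ p ∈ pull G₁ G₂ φ (c ++ [x]), TrivOn p vo := by
      intro x p hp
      cases x
      · exact fun w hw => hact p hp w hw
      · exact fun w hw => hact1 p hp w hw
    -- pulls are supported in the cone of vb
    have hsub : ∀ (x : Bool), ∀ p ∈ pull G₁ G₂ φ (c ++ [x]), p ∈ ristSubgroup vb := by
      intro x p hp
      have hrv : p ∈ ristSubgroup v := hpull_rist x p hp
      intro w hw
      by_cases hvw : v <+: w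
      · rcases cone_cases hvw with rfl | hh | hh
        · exact rist_fix_self hrv
        · cases b with
          | false => exact absurd hh hw
          | true => exact hactx x p hp w hh
        · cases b with
          | false => exact hactx x p hp w hh
          | true => exact absurd hh hw
      · exact mem_rist hrv w hvw
    -- contradiction: a nontrivial element below vo has trivial image
    obtain ⟨gh, hghrist, hgh1⟩ := wb_witness G₁ h1 vo
    have hPhighc : Phi G₁ G₂ φ gh ∈ ristSubgroup c :=
      pkg_purity G₁ G₂ φ hP hE (rist_mono (prefix_child (!b)) hghrist)
    have htriv01 : ∀ x : Bool, TrivOn (Phi G₁ G₂ φ gh) (c ++ [x]) := by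
      intro x
      apply fact1_hard
      intro w hw
      obtain ⟨y, hyrist, hy1⟩ := wb_witness G₂ h2 w
      refine ⟨(y : ↥TreeAut), hyrist, hy1, ?_⟩
      have hyp : ((φ.symm y : ↥G₁) : ↥TreeAut) ∈ pull G₁ G₂ φ (c ++ [x]) := by
        refine (mem_pull G₁ G₂ φ).2 ⟨φ.symm y, ?_, rfl⟩
        rw [phi_symm_Phi]
        exact rist_mono hw hyrist
      have hsymb : ((φ.symm y : ↥G₁) : ↥TreeAut) ∈ ristSubgroup vb := hsub x _ hyp
      have hcomm : Commute ((φ.symm y : ↥G₁) : ↥TreeAut) ((gh : ↥G₁) : ↥TreeAut) :=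
        disjoint_rist_commute hsymb hghrist
          (not_prefix_of_ne (by omega) hvbvo) (not_prefix_of_ne (by omega) hvbvo.symm)
      have hc2 := commute_phi_of_coe G₁ G₂ φ hcomm
      rw [phi_symm_Phi] at hc2
      exact hc2.symm
    exact Phi_ne_one G₁ G₂ φ hgh1
      (rist_trivon_children hPhighc (htriv01 false) (htriv01 true))

end Main5

end St14

namespace St14

section Main6

variable (G₁ G₂ : Subgroup ↥TreeAut) (φ : ↥G₁ ≃* ↥G₂)
variable (h1 : WeaklyBranch G₁) (h2 : WeaklyBranch G₂)
variable (H : ℕ → Subgroup ↥G₁)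
variable (hH2 : ∀ n, ∀ h ∈ H n, fixesLevel (Phi G₁ G₂ φ h) n)
variable (hH3a : ∀ n, ∀ v : Word, v.length = n →
      LevelTransitiveOn ((fun x : ↥G₁ => (x : ↥TreeAut)) '' (H n : Set ↥G₁)) v)

include h1 h2 hH2 hH3a

lemma child_image {n : ℕ} (hP : Pkg G₁ G₂ φ n) {v c : Word}
    (hE : Edge G₁ G₂ φ n v c) (b : Bool)
    {g : ↥G₁} (hg : (g : ↥TreeAut) ∈ ristSubgroup (v ++ [b])) (x : Bool) :
    ap (Phi G₁ G₂ φ g) (c ++ [x]) = c ++ [x] := by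
  have hqc : Phi G₁ G₂ φ g ∈ ristSubgroup c :=
    pkg_purity G₁ G₂ φ hP hE (rist_mono (prefix_child b) hg)
  have himg : ∀ y : Bool, ∃ y' : Bool,
      ap (Phi G₁ G₂ φ g) (c ++ [y]) = c ++ [y'] := by
    intro y
    have hpre : c <+: ap (Phi G₁ G₂ φ g) (c ++ [y]) :=
      rist_cone_preserve hqc (prefix_child y)
    exact prefix_succ_exists hpre (by rw [ap_len]; simp)
  obtain ⟨y0, hy0⟩ := himg false
  have hy0f : y0 = false := by
    by_contra hy0t
    have : y0 = true := by cases y0 <;> simp_all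
    rw [this] at hy0
    exact noswap G₁ G₂ φ h1 h2 H hH2 hH3a hP hE b hg hy0
  rw [hy0f] at hy0
  cases x with
  | false => exact hy0
  | true =>
    obtain ⟨y1, hy1⟩ := himg true
    cases y1 with
    | true => exact hy1
    | false =>
      exfalso
      have : ap (Phi G₁ G₂ φ g) (c ++ [true]) = ap (Phi G₁ G₂ φ g) (c ++ [false]) := by
        rw [hy0, hy1]
      have := ap_inj _ this
      simp at this

lemma phig_fix_small {n : ℕ} (hP : Pkg G₁ G₂ φ n) {v c : Word}
    (hE : Edge G₁ G₂ φ n v c) {b : Bool}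
    {g : ↥G₁} (hg : (g : ↥TreeAut) ∈ ristSubgroup (v ++ [b])) :
    ∀ u : Word, u.length ≤ n + 1 → ap (Phi G₁ G₂ φ g) u = u := by
  have hqc : Phi G₁ G₂ φ g ∈ ristSubgroup c :=
    pkg_purity G₁ G₂ φ hP hE (rist_mono (prefix_child b) hg)
  intro u hu
  by_cases hcu : c <+: u
  · rcases cone_cases hcu with rfl | hh | hh
    · exact rist_fix_self hqc
    · have : u = c ++ [false] := by
        apply (prefix_eq_of_len hh ?_).symm
        have := hh.length_le
        have hcl : c.length = n := hE.2.1
        simp at this ⊢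
        omega
      rw [this]
      exact child_image G₁ G₂ φ h1 h2 H hH2 hH3a hP hE b hg false
    · have : u = c ++ [true] := by
        apply (prefix_eq_of_len hh ?_).symm
        have := hh.length_le
        have hcl : c.length = n := hE.2.1
        simp at this ⊢
        omega
      rw [this]
      exact child_image G₁ G₂ φ h1 h2 H hH2 hH3a hP hE b hg true
  · exact mem_rist hqc u hcu

lemma moved_child {n : ℕ} (hP : Pkg G₁ G₂ φ n) {v c : Word}
    (hE : Edge G₁ G₂ φ n v c) {b : Bool}
    {g : ↥G₁} (hg : (g : ↥TreeAut) ∈ ristSubgroup (v ++ [b])) {w : Word}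
    (hm : ap (Phi G₁ G₂ φ g) w ≠ w) :
    ∃ x : Bool, (c ++ [x]) <+: w := by
  have hqc : Phi G₁ G₂ φ g ∈ ristSubgroup c :=
    pkg_purity G₁ G₂ φ hP hE (rist_mono (prefix_child b) hg)
  have hcw : c <+: w := rist_moved_prefix hqc hm
  rcases cone_cases hcw with rfl | hh | hh
  · exact absurd (rist_fix_self hqc) hm
  · exact ⟨false, hh⟩
  · exact ⟨true, hh⟩

lemma nomix {n : ℕ} (hP : Pkg G₁ G₂ φ n) {v c : Word}
    (hE : Edge G₁ G₂ φ n v c) (b : Bool)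
    (hE0 : Edge G₁ G₂ φ (n+1) (v ++ [b]) (c ++ [false]))
    (hE1 : Edge G₁ G₂ φ (n+1) (v ++ [b]) (c ++ [true])) : False := by
  have hclen : c.length = n := hE.2.1
  have hvlen : v.length = n := hE.1
  have hvblen : (v ++ [b]).length = n + 1 := by simp [hvlen]
  -- each pull acts somewhere below v ++ [b]
  have hactive : ∀ x : Bool, (∃ gx : ↥G₁, (gx : ↥TreeAut) ∈ ristSubgroup (v ++ [b]) ∧
      ∃ wx, (c ++ [x]) <+: wx ∧ ap (Phi G₁ G₂ φ gx) wx ≠ wx) →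
      ∃ p ∈ pull G₁ G₂ φ (c ++ [x]), ∃ w, (v ++ [b]) <+: w ∧ ap p w ≠ w := by
    intro x ⟨gx, hgx, wx, hwx, hmx⟩
    by_contra hno
    push_neg at hno
    have htrivx : TrivOn (Phi G₁ G₂ φ gx) (c ++ [x]) := by
      apply fact1_hard
      intro w hw
      obtain ⟨y, hyrist, hy1⟩ := wb_witness G₂ h2 w
      refine ⟨(y : ↥TreeAut), hyrist, hy1, ?_⟩
      have hyp : ((φ.symm y : ↥G₁) : ↥TreeAut) ∈ pull G₁ G₂ φ (c ++ [x]) := by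
        refine (mem_pull G₁ G₂ φ).2 ⟨φ.symm y, ?_, rfl⟩
        rw [phi_symm_Phi]
        exact rist_mono hw hyrist
      have htrivp : TrivOn ((φ.symm y : ↥G₁) : ↥TreeAut) (v ++ [b]) := by
        intro w' hw'
        exact hno _ hyp w' hw'
      have hcomm : Commute ((φ.symm y : ↥G₁) : ↥TreeAut) ((gx : ↥G₁) : ↥TreeAut) :=
        trivOn_commute_rist htrivp hgx
      have hc2 := commute_phi_of_coe G₁ G₂ φ hcomm
      rw [phi_symm_Phi] at hc2
      exact hc2.symm
    exact hmx (htrivx wx hwx)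
  obtain ⟨-, -, g0, hg0, w0, hw0, hm0⟩ := hE0
  obtain ⟨-, -, g1, hg1, w1, hw1, hm1⟩ := hE1
  have hact0 := hactive false ⟨g0, hg0, w0, hw0, hm0⟩
  have hact1 := hactive true ⟨g1, hg1, w1, hw1, hm1⟩
  apply machine_pull G₁ G₂ φ h1 H hH2 hH3a n (c ++ [false]) (c ++ [true])
    (by simp [hclen]) (by simp [hclen]) (by simp) (v ++ [b])
  intro x hx
  constructor
  · exact spreading G₁ (pull G₁ G₂ φ (c ++ [false])) (n+1) H
      (pull_norm_plain G₁ G₂ φ H hH2 (by simp [hclen]))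
      (v ++ [b]) hvblen (hH3a (n+1) (v ++ [b]) hvblen) hact0 x hx
  · exact spreading G₁ (pull G₁ G₂ φ (c ++ [true])) (n+1) H
      (pull_norm_plain G₁ G₂ φ H hH2 (by simp [hclen]))
      (v ++ [b]) hvblen (hH3a (n+1) (v ++ [b]) hvblen) hact1 x hx

/-- purity one level down, given no mixing -/
lemma purity_child {n : ℕ} (hP : Pkg G₁ G₂ φ n) {v c : Word}
    (hE : Edge G₁ G₂ φ n v c) {b : Bool} {ch : Word}
    (hch : ch.length = n + 1)
    (hEb : Edge G₁ G₂ φ (n+1) (v ++ [b]) ch)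
    {g : ↥G₁} (hg : (g : ↥TreeAut) ∈ ristSubgroup (v ++ [b])) :
    Phi G₁ G₂ φ g ∈ ristSubgroup ch := by
  -- first, ch is a child of c
  obtain ⟨-, -, g', hg', w', hw', hm'⟩ := id hEb
  obtain ⟨x', hx'⟩ := moved_child G₁ G₂ φ h1 h2 H hH2 hH3a hP hE hg' hm'
  have hceq : ch = c ++ [x'] := prefix_unique hw' hx' (by simp [hch, hE.2.1])
  intro w hw
  by_contra hm
  obtain ⟨x, hx⟩ := moved_child G₁ G₂ φ h1 h2 H hH2 hH3a hP hE hg hm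
  have hxx' : x ≠ x' := by
    intro hcon
    rw [hcon, ← hceq] at hx
    exact hw hx
  have hEother : Edge G₁ G₂ φ (n+1) (v ++ [b]) (c ++ [x]) :=
    ⟨by simp [hE.1], by simp [hE.2.1], g, hg, w, hx, hm⟩
  rw [hceq] at hEb
  cases x with
  | false =>
    have : x' = true := by cases x' <;> simp_all
    rw [this] at hEb
    exact nomix G₁ G₂ φ h1 h2 H hH2 hH3a hP hE b hEother hEb
  | true =>
    have : x' = false := by cases x' <;> simp_all
    rw [this] at hEb
    exact nomix G₁ G₂ φ h1 h2 H hH2 hH3a hP hE b hEb hEother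

lemma sibling_inj {n : ℕ} (hP : Pkg G₁ G₂ φ n) {v c : Word}
    (hE : Edge G₁ G₂ φ n v c) {ch : Word} (hch : ch.length = n + 1)
    (hEf : Edge G₁ G₂ φ (n+1) (v ++ [false]) ch)
    (hEt : Edge G₁ G₂ φ (n+1) (v ++ [true]) ch) : False := by
  -- ch is a child of c
  obtain ⟨-, -, g', hg', w', hw', hm'⟩ := id hEf
  obtain ⟨x', hx'⟩ := moved_child G₁ G₂ φ h1 h2 H hH2 hH3a hP hE hg' hm'
  have hceq : ch = c ++ [x'] := prefix_unique hw' hx' (by simp [hch, hE.2.1])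
  set co := c ++ [!x'] with hcodef
  have hcone : co ≠ ch := by
    rw [hceq, hcodef]
    cases x' <;> simp
  have hcolen : co.length = n + 1 := by simp [hcodef, hE.2.1]
  obtain ⟨y, hyrist, hy1⟩ := wb_witness G₂ h2 co
  set d := φ.symm y with hddef
  have hdv : (d : ↥TreeAut) ∈ ristSubgroup v :=
    pkg_dual G₁ G₂ φ hP h1 hE (rist_mono (prefix_child (!x')) hyrist)
  have htriv : ∀ bb : Bool, TrivOn (d : ↥TreeAut) (v ++ [bb]) := by
    intro bb
    apply fact1_hard
    intro w hw
    obtain ⟨z, hzrist, hz1⟩ := wb_witness G₁ h1 w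
    refine ⟨(z : ↥TreeAut), hzrist, hz1, ?_⟩
    have hzc2 : Phi G₁ G₂ φ z ∈ ristSubgroup ch := by
      cases bb with
      | false =>
        exact purity_child G₁ G₂ φ h1 h2 H hH2 hH3a hP hE hch hEf
          (rist_mono hw hzrist)
      | true =>
        exact purity_child G₁ G₂ φ h1 h2 H hH2 hH3a hP hE hch hEt
          (rist_mono hw hzrist)
    have hcomm : Commute ((y : ↥G₂) : ↥TreeAut) (Phi G₁ G₂ φ z) :=
      disjoint_rist_commute hyrist hzc2
        (not_prefix_of_ne (by omega) hcone)
        (not_prefix_of_ne (by omega) hcone.symm)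
    have : Commute (Phi G₁ G₂ φ d) (Phi G₁ G₂ φ z) := by
      rw [hddef, phi_symm_Phi]
      exact hcomm
    exact coe_commute_of_phi G₁ G₂ φ this
  have hd1 : (d : ↥TreeAut) = 1 :=
    rist_trivon_children hdv (htriv false) (htriv true)
  apply hy1
  have hdone : d = 1 := Subtype.coe_injective hd1
  have : y = 1 := by
    have := congrArg φ hdone
    rw [hddef] at this
    simpa using this
  rw [this]
  rfl

end Main6

end St14

namespace St14

section Main7

variable (G₁ G₂ : Subgroup ↥TreeAut) (φ : ↥G₁ ≃* ↥G₂)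
variable (h1 : WeaklyBranch G₁) (h2 : WeaklyBranch G₂)
variable (H : ℕ → Subgroup ↥G₁)
variable (hH2 : ∀ n, ∀ h ∈ H n, fixesLevel (Phi G₁ G₂ φ h) n)
variable (hH3a : ∀ n, ∀ v : Word, v.length = n →
      LevelTransitiveOn ((fun x : ↥G₁ => (x : ↥TreeAut)) '' (H n : Set ↥G₁)) v)

include h1 h2 hH2 hH3a

lemma pkg_step {n : ℕ} (hP : Pkg G₁ G₂ φ n) : Pkg G₁ G₂ φ (n + 1) := by
  classical
  have hdec : ∀ w : Word, w.length = n + 1 →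
      ∃ (u : Word) (b : Bool), w = u ++ [b] ∧ u.length = n := by
    intro w hw
    have hpre : w.take n <+: w := List.take_prefix n w
    have htl : (w.take n).length = n := by
      rw [List.length_take]
      omega
    obtain ⟨b, hb⟩ := prefix_succ_exists hpre (by omega)
    exact ⟨w.take n, b, hb, htl⟩
  -- classification: a level-(n+1) edge target is a child of the level-n match
  have hchild : ∀ (v c : Word) (b : Bool), Edge G₁ G₂ φ n v c →
      ∀ ch, Edge G₁ G₂ φ (n+1) (v ++ [b]) ch → ∃ x, ch = c ++ [x] := by
    intro v c b hEc ch hEch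
    obtain ⟨-, hchlen, g, hg, w, hw, hm⟩ := hEch
    obtain ⟨x, hx⟩ := moved_child G₁ G₂ φ h1 h2 H hH2 hH3a hP hEc hg hm
    exact ⟨x, prefix_unique hw hx (by simp [hchlen, hEc.2.1])⟩
  -- totality
  have htot : ∀ vb : Word, vb.length = n + 1 → ∃ ch, Edge G₁ G₂ φ (n+1) vb ch := by
    intro vb hvb
    obtain ⟨v, b, rfl, hvlen⟩ := hdec vb hvb
    obtain ⟨c, hEc⟩ := hP.1 v hvlen
    obtain ⟨gh, hghrist, hgh1⟩ := wb_witness G₁ h1 (v ++ [b])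
    obtain ⟨w, hw⟩ := exists_moved (Phi_ne_one G₁ G₂ φ hgh1)
    obtain ⟨x, hx⟩ := moved_child G₁ G₂ φ h1 h2 H hH2 hH3a hP hEc hghrist hw
    exact ⟨c ++ [x], by simp [hvlen], by simp [hEc.2.1], gh, hghrist, w, hx, hw⟩
  refine ⟨htot, ?_, ?_, ?_⟩
  · -- uniqueness
    intro vb ch ch' hEa hEb
    have hvb : vb.length = n + 1 := hEa.1
    obtain ⟨v, b, rfl, hvlen⟩ := hdec vb hvb
    obtain ⟨c, hEc⟩ := hP.1 v hvlen
    obtain ⟨x, rfl⟩ := hchild v c b hEc ch hEa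
    obtain ⟨x', rfl⟩ := hchild v c b hEc ch' hEb
    by_cases hxx : x = x'
    · rw [hxx]
    · exfalso
      cases x with
      | false =>
        have : x' = true := by cases x' <;> simp_all
        rw [this] at hEb
        exact nomix G₁ G₂ φ h1 h2 H hH2 hH3a hP hEc b hEa hEb
      | true =>
        have : x' = false := by cases x' <;> simp_all
        rw [this] at hEb
        exact nomix G₁ G₂ φ h1 h2 H hH2 hH3a hP hEc b hEb hEa
  · -- injectivity
    intro vb vb' ch hEa hEb
    have hvb : vb.length = n + 1 := hEa.1
    have hvb' : vb'.length = n + 1 := hEb.1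
    have hchlen : ch.length = n + 1 := hEa.2.1
    obtain ⟨v, b, rfl, hvlen⟩ := hdec vb hvb
    obtain ⟨v', b', rfl, hvlen'⟩ := hdec vb' hvb'
    -- parent edges
    have hparent : ∀ (u : Word) (bb : Bool), u.length = n →
        Edge G₁ G₂ φ (n+1) (u ++ [bb]) ch → Edge G₁ G₂ φ n u (ch.take n) := by
      intro u bb hu hE
      obtain ⟨-, -, g, hg, w, hw, hm⟩ := hE
      exact ⟨hu, by rw [List.length_take]; omega, g, rist_mono (prefix_child bb) hg,
        w, (List.take_prefix n ch).trans hw, hm⟩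
    have hveq : v = v' := hP.2.2.1 v v' (ch.take n)
      (hparent v b hvlen hEa) (hparent v' b' hvlen' hEb)
    subst hveq
    by_cases hbb : b = b'
    · rw [hbb]
    · exfalso
      obtain ⟨c, hEc⟩ := hP.1 v hvlen
      cases b with
      | false =>
        have : b' = true := by cases b' <;> simp_all
        rw [this] at hEb
        exact sibling_inj G₁ G₂ φ h1 h2 H hH2 hH3a hP hEc hchlen hEa hEb
      | true =>
        have : b' = false := by cases b' <;> simp_all
        rw [this] at hEb
        exact sibling_inj G₁ G₂ φ h1 h2 H hH2 hH3a hP hEc hchlen hEb hEa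
  · -- surjectivity
    intro ch hch
    obtain ⟨c, x, rfl, hclen⟩ := hdec ch hch
    obtain ⟨v, hEc⟩ := hP.2.2.2 c hclen
    have hvlen : v.length = n := hEc.1
    obtain ⟨ch0, hE0⟩ := htot (v ++ [false]) (by simp [hvlen])
    obtain ⟨ch1, hE1⟩ := htot (v ++ [true]) (by simp [hvlen])
    obtain ⟨x0, rfl⟩ := hchild v c false hEc ch0 hE0
    obtain ⟨x1, rfl⟩ := hchild v c true hEc ch1 hE1
    have hx01 : x0 ≠ x1 := by
      intro hcon
      rw [hcon] at hE0
      exact sibling_inj G₁ G₂ φ h1 h2 H hH2 hH3a hP hEc (by simp [hclen]) hE0 hE1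
    by_cases hx : x = x0
    · exact ⟨v ++ [false], hx ▸ hE0⟩
    · have : x = x1 := by cases x <;> cases x0 <;> cases x1 <;> simp_all
      exact ⟨v ++ [true], this ▸ hE1⟩

lemma pkg_base : Pkg G₁ G₂ φ 0 := by
  have hrist : ∀ x : ↥TreeAut, x ∈ ristSubgroup ([] : Word) := by
    intro x w hw
    exact absurd (List.nil_prefix) hw
  have hedge : Edge G₁ G₂ φ 0 [] [] := by
    obtain ⟨gh, -, hgh1⟩ := wb_witness G₁ h1 []
    obtain ⟨w, hw⟩ := exists_moved (Phi_ne_one G₁ G₂ φ hgh1)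
    exact ⟨rfl, rfl, gh, hrist _, w, List.nil_prefix, hw⟩
  refine ⟨?_, ?_, ?_, ?_⟩
  · intro v hv
    rw [List.length_eq_zero_iff] at hv
    exact ⟨[], hv ▸ hedge⟩
  · intro v c c' hE hE'
    have h1 := hE.2.1
    have h2 := hE'.2.1
    rw [List.length_eq_zero_iff] at h1 h2
    rw [h1, h2]
  · intro v v' c hE hE'
    have h1 := hE.1
    have h2 := hE'.1
    rw [List.length_eq_zero_iff] at h1 h2
    rw [h1, h2]
  · intro c hc
    rw [List.length_eq_zero_iff] at hc
    exact ⟨[], hc ▸ hedge⟩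

lemma pkg_all : ∀ n, Pkg G₁ G₂ φ n := by
  intro n
  induction n with
  | zero => exact pkg_base G₁ G₂ φ h1 h2 H hH2 hH3a
  | succ n ih => exact pkg_step G₁ G₂ φ h1 h2 H hH2 hH3a ih

end Main7

end St14

namespace St14

section Main8

variable (G₁ G₂ : Subgroup ↥TreeAut) (φ : ↥G₁ ≃* ↥G₂)
variable (h1 : WeaklyBranch G₁) (h2 : WeaklyBranch G₂)
variable (H : ℕ → Subgroup ↥G₁)
variable (hH2 : ∀ n, ∀ h ∈ H n, fixesLevel (Phi G₁ G₂ φ h) n)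
variable (hH3a : ∀ n, ∀ v : Word, v.length = n →
      LevelTransitiveOn ((fun x : ↥G₁ => (x : ↥TreeAut)) '' (H n : Set ↥G₁)) v)

include h1 h2 hH2 hH3a

theorem main_conjugation :
    ∃ f : ↥TreeAut, ∀ g : ↥G₁, Phi G₁ G₂ φ g = f * (g : ↥TreeAut) * f⁻¹ := by
  classical
  have hPkg : ∀ n, Pkg G₁ G₂ φ n := pkg_all G₁ G₂ φ h1 h2 H hH2 hH3a
  set F : Word → Word := fun v => Classical.choose ((hPkg v.length).1 v rfl) with hFdef
  have hF : ∀ v : Word, Edge G₁ G₂ φ v.length v (F v) := by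
    intro v
    exact Classical.choose_spec ((hPkg v.length).1 v rfl)
  have hFlen : ∀ v, (F v).length = v.length := fun v => (hF v).2.1
  have hFuniq : ∀ (v c : Word), Edge G₁ G₂ φ v.length v c → c = F v := by
    intro v c hE
    exact (hPkg v.length).2.1 v c (F v) hE (hF v)
  -- equivariance
  have hFequi : ∀ (g : ↥G₁) (v : Word),
      ap (Phi G₁ G₂ φ g) (F v) = F (ap (g : ↥TreeAut) v) := by
    intro g v
    have hE1 := edge_transport G₁ G₂ φ (hF v) g
    have hE2 := hF (ap (g : ↥TreeAut) v)
    rw [ap_len] at hE2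
    exact (hPkg v.length).2.1 (ap (g : ↥TreeAut) v) _ _ hE1 hE2
  -- injectivity
  have hFinj : Function.Injective F := by
    intro v v' hvv
    have hlen : v.length = v'.length := by
      rw [← hFlen v, ← hFlen v', hvv]
    apply (hPkg v.length).2.2.1 v v' (F v) (hF v)
    rw [hvv]
    have := hF v'
    rwa [← hlen] at this
  -- surjectivity
  have hFsurj : Function.Surjective F := by
    intro c
    obtain ⟨v, hE⟩ := (hPkg c.length).2.2.2 c rfl
    have hvlen : v.length = c.length := hE.1
    refine ⟨v, ?_⟩
    symm
    apply hFuniq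
    rwa [hvlen]
  -- step prefix preservation
  have hFstep : ∀ (v : Word) (b : Bool), F v <+: F (v ++ [b]) := by
    intro v b
    have hE := hF (v ++ [b])
    have hlen : (v ++ [b]).length = v.length + 1 := by simp
    obtain ⟨-, -, g, hg, w, hw, hm⟩ := hE
    have hpar : Edge G₁ G₂ φ v.length v ((F (v ++ [b])).take v.length) := by
      refine ⟨rfl, ?_, g, rist_mono (prefix_child b) hg, w,
        (List.take_prefix _ _).trans hw, hm⟩
      rw [List.length_take, hFlen, hlen]
      simp
    have := hFuniq v _ hpar
    rw [← this]
    exact List.take_prefix _ _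
  have hFpre : ∀ (u t : Word), F u <+: F (u ++ t) := by
    intro u t
    induction t using List.reverseRecOn with
    | nil => simp
    | append_singleton t b ih =>
      have h2 : F (u ++ t) <+: F (u ++ t ++ [b]) := hFstep (u ++ t) b
      rw [← List.append_assoc] at *
      exact ih.trans h2
  have hFmono : ∀ (u v : Word), u <+: v → F u <+: F v := by
    intro u v huv
    obtain ⟨t, rfl⟩ := huv
    exact hFpre u t
  -- F is a tree automorphism
  have hFbij : Function.Bijective F := ⟨hFinj, hFsurj⟩
  set e : Equiv.Perm Word := Equiv.ofBijective F hFbij with hedef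
  have happ : ∀ w, e w = F w := fun w => rfl
  have hmem : e ∈ TreeAut := by
    constructor
    · intro w
      rw [happ, hFlen]
    · intro u v
      constructor
      · intro huv
        rw [happ, happ]
        exact hFmono u v huv
      · intro huv
        rw [happ, happ] at huv
        have hlen : u.length ≤ v.length := by
          have := huv.length_le
          rwa [hFlen, hFlen] at this
        have h1 : F (v.take u.length) <+: F v := hFmono _ _ (List.take_prefix _ _)
        have h2 : F (v.take u.length) = F u := by
          apply prefix_unique h1 huv
          rw [hFlen, hFlen, List.length_take]
          omega
        have := hFinj h2
        rw [← this]
        exact List.take_prefix _ _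
  refine ⟨⟨e, hmem⟩, ?_⟩
  intro g
  set x : ↥TreeAut := (⟨e, hmem⟩ : ↥TreeAut) with hxdef
  apply treeaut_ext
  intro w
  obtain ⟨w', rfl⟩ : ∃ w', ap x w' = w :=
    ⟨e.symm w, by show e (e.symm w) = w; simp⟩
  have hxw : ap x w' = F w' := rfl
  have hR : ap (x * (g : ↥TreeAut) * x⁻¹) (ap x w') = F (ap (g : ↥TreeAut) w') := by
    rw [show x * (g : ↥TreeAut) * x⁻¹ = x * ((g : ↥TreeAut) * x⁻¹) by group,
      ap_mul, ap_mul, ap_inv_ap]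
    rfl
  rw [hR, hxw]
  exact hFequi g w'

end Main8

end St14

/-- a saturated isomorphism between weakly branch subgroups of `Aut(X*)`
is induced by an automorphism of the tree. -/
theorem statement14 (G₁ G₂ : Subgroup ↥TreeAut) (h1 : WeaklyBranch G₁)
    (h2 : WeaklyBranch G₂) (φ : ↥G₁ ≃* ↥G₂) (hφ : Saturated G₁ G₂ φ) :
    ∃ f : ↥TreeAut, ∀ g : ↥G₁, ((φ g : ↥G₂) : ↥TreeAut) = f * (g : ↥TreeAut) * f⁻¹ := by
  obtain ⟨H, hH1, hH2, hH3⟩ := hφ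
  exact St14.main_conjugation G₁ G₂ φ h1 h2 H
    (fun n h hh => hH2 n h hh)
    (fun n v hv => (hH3 n v hv).1)
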